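/- arXiv:1608.04673 — 7 statements merged into one kernel-verified Lean document; each statement's English description precedes it below -/
import Mathlib

section
/- Let Ω be a finite set with more than one element and let G be a solvable subgroup of the symmetric group on Ω that is primitive. Then any minimal normal subgroup N of G is an elementary abelian l-group for some prime l (i.e. N is a nontrivial finite abelian group in which every nonidentity element has order l), and N acts simply transitively on Ω; in particular the cardinality of Ω is l^n where l^n is the order of N. -/
/-- A subgroup `G` of the symmetric group on `Ω` is primitive if it is nontrivial and
there is no `G`-stable essential partition of `Ω` (a partition with more than one part,
all parts nonempty, some part with more than one element, whose parts are permuted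
by every element of `G`). -/
def IsPrimitivePermGroup {Ω : Type*} (G : Subgroup (Equiv.Perm Ω)) : Prop :=
  G ≠ ⊥ ∧
    ¬∃ P : Set (Set Ω), Setoid.IsPartition P ∧ 1 < P.ncard ∧ (∃ B ∈ P, 1 < B.ncard) ∧
      ∀ g ∈ G, ∀ B ∈ P, ⇑g '' B ∈ P

theorem stmt0 {Ω : Type*} [Finite Ω] (hΩ : 1 < Nat.card Ω)
    (G : Subgroup (Equiv.Perm Ω)) (hsolv : IsSolvable G) (hprim : IsPrimitivePermGroup G)
    (N : Subgroup (Equiv.Perm Ω)) (hNG : N ≤ G)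
    (hNnorm : ∀ g ∈ G, ∀ n ∈ N, g * n * g⁻¹ ∈ N) (hNbot : N ≠ ⊥)
    (hNmin : ∀ N' : Subgroup (Equiv.Perm Ω), N' ≤ G →
      (∀ g ∈ G, ∀ n ∈ N', g * n * g⁻¹ ∈ N') → N' ≠ ⊥ → N' ≤ N → N' = N) :
    ∃ l : ℕ, l.Prime ∧
      (∀ n ∈ N, n ≠ 1 → orderOf n = l) ∧
      (∀ a ∈ N, ∀ b ∈ N, a * b = b * a) ∧
      (∀ x y : Ω, ∃! g : Equiv.Perm Ω, g ∈ N ∧ g x = y) ∧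
      ∃ k : ℕ, 0 < k ∧ Nat.card N = l ^ k ∧ Nat.card Ω = l ^ k := by
  classical
  haveI : Group.IsSolvable G := hsolv
  -- conjugation stabilizes N
  have hconjN : ∀ g ∈ G, Subgroup.map (MulAut.conj g).toMonoidHom N = N := by
    intro g hg
    apply le_antisymm
    · rintro _ ⟨n, hn, rfl⟩
      simpa [MulAut.conj_apply] using hNnorm g hg n hn
    · intro n hn
      refine ⟨g⁻¹ * n * g, by simpa [mul_assoc] using hNnorm g⁻¹ (inv_mem hg) n hn, ?_⟩
      simp [MulAut.conj_apply]
      group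
  -- N is abelian
  have hNle : (⁅N, N⁆ : Subgroup (Equiv.Perm Ω)) ≤ N := by
    rw [Subgroup.commutator_le]
    intro p hp q hq
    have h1 : p * q * p⁻¹ ∈ N := hNnorm p (hNG hp) q hq
    simpa [commutatorElement_def, mul_assoc] using mul_mem h1 (inv_mem hq)
  haveI hNsolv : IsSolvable ↥N := solvable_of_solvable_injective (Subgroup.inclusion_injective hNG)
  have habel : ∀ a ∈ N, ∀ b ∈ N, a * b = b * a := by
    by_cases hcb : (⁅N, N⁆ : Subgroup (Equiv.Perm Ω)) = ⊥
    · intro a ha b hb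
      open scoped commutatorElement in
      have h1 : ⁅a, b⁆ ∈ (⁅N, N⁆ : Subgroup (Equiv.Perm Ω)) :=
        Subgroup.commutator_mem_commutator ha hb
      rw [hcb, Subgroup.mem_bot] at h1
      exact commutatorElement_eq_one_iff_mul_comm.mp h1
    · exfalso
      have hcnorm : ∀ g ∈ G, ∀ n ∈ (⁅N, N⁆ : Subgroup (Equiv.Perm Ω)),
          g * n * g⁻¹ ∈ (⁅N, N⁆ : Subgroup (Equiv.Perm Ω)) := by
        intro g hg n hn
        have h1 : (MulAut.conj g) n ∈
            Subgroup.map (MulAut.conj g).toMonoidHom (⁅N, N⁆ : Subgroup (Equiv.Perm Ω)) :=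
          Subgroup.mem_map_of_mem _ hn
        rw [Subgroup.map_commutator, hconjN g hg] at h1
        simpa [MulAut.conj_apply] using h1
      have heq : (⁅N, N⁆ : Subgroup (Equiv.Perm Ω)) = N :=
        hNmin _ (hNle.trans hNG) hcnorm hcb hNle
      have hder : ∀ k, Subgroup.map N.subtype (derivedSeries ↥N k) = N := by
        intro k
        induction k with
        | zero =>
          rw [derivedSeries_zero, ← MonoidHom.range_eq_map, Subgroup.range_subtype]
        | succ k ih =>
          rw [derivedSeries_succ, Subgroup.map_commutator, ih, heq]
      obtain ⟨n, hn⟩ := (isSolvable_def ↥N).mp hNsolv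
      have := hder n
      rw [hn, Subgroup.map_bot] at this
      exact hNbot this.symm
  -- the prime
  haveI hNt : Nontrivial ↥N := (Subgroup.nontrivial_iff_ne_bot N).mpr hNbot
  haveI : Fintype ↥N := Fintype.ofFinite _
  have hcard1 : 1 < Nat.card ↥N := Finite.one_lt_card_iff_nontrivial.mpr hNt
  obtain ⟨l, hl, hldvd⟩ := Nat.exists_prime_and_dvd hcard1.ne'
  haveI : Fact l.Prime := ⟨hl⟩
  obtain ⟨t, ht⟩ := exists_prime_orderOf_dvd_card (G := ↥N) l (by rwa [← Nat.card_eq_fintype_card])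
  -- elementary abelian: N' = l-torsion
  have hcommute : ∀ a ∈ N, ∀ b ∈ N, Commute a b := fun a ha b hb => habel a ha b hb
  let N' : Subgroup (Equiv.Perm Ω) :=
    { carrier := {n | n ∈ N ∧ n ^ l = 1}
      one_mem' := ⟨N.one_mem, one_pow l⟩
      mul_mem' := fun {a b} ha hb => ⟨N.mul_mem ha.1 hb.1, by
        rw [(hcommute a ha.1 b hb.1).mul_pow, ha.2, hb.2, one_mul]⟩
      inv_mem' := fun {a} ha => ⟨N.inv_mem ha.1, by rw [inv_pow, ha.2, inv_one]⟩ }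
  have hN'mem : ∀ n, n ∈ N' ↔ n ∈ N ∧ n ^ l = 1 := fun n => Iff.rfl
  have hN'N : N' ≤ N := fun n hn => hn.1
  have hN'bot : N' ≠ ⊥ := by
    intro h
    have htN : ((t : Equiv.Perm Ω)) ∈ N' := by
      refine ⟨t.2, ?_⟩
      have : t ^ l = 1 := by rw [← ht]; exact pow_orderOf_eq_one t
      simpa using congrArg (Subgroup.subtype N) this
    rw [h, Subgroup.mem_bot] at htN
    have : orderOf (t : Equiv.Perm Ω) = l := by rw [Subgroup.orderOf_coe, ht]
    rw [htN, orderOf_one] at this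
    exact hl.ne_one this.symm
  have hN'norm : ∀ g ∈ G, ∀ n ∈ N', g * n * g⁻¹ ∈ N' := by
    intro g hg n hn
    refine ⟨hNnorm g hg n hn.1, ?_⟩
    rw [conj_pow, hn.2, mul_one, mul_inv_cancel]
  have hN'eq : N' = N := hNmin N' (hN'N.trans hNG) hN'norm hN'bot hN'N
  have hpowl : ∀ n ∈ N, n ^ l = 1 := by
    intro n hn
    rw [← hN'eq] at hn
    exact hn.2
  have horder : ∀ n ∈ N, n ≠ 1 → orderOf n = l := by
    intro n hn hn1
    have h1 : orderOf n ∣ l := orderOf_dvd_of_pow_eq_one (hpowl n hn)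
    rcases (Nat.Prime.eq_one_or_self_of_dvd hl _ h1) with h | h
    · exact absurd (orderOf_eq_one_iff.mp h) hn1
    · exact h
  -- orbits
  set orb : Ω → Set Ω := fun x => (fun n : Equiv.Perm Ω => n x) '' (N : Set (Equiv.Perm Ω))
    with horb
  have hmem_orb : ∀ x y, y ∈ orb x ↔ ∃ n ∈ N, n x = y := by
    intro x y; simp [horb, Set.mem_image]
  have hself : ∀ x, x ∈ orb x := fun x => (hmem_orb x x).mpr ⟨1, N.one_mem, rfl⟩
  have horb_eq : ∀ x y, y ∈ orb x → orb x = orb y := by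
    intro x y hy
    obtain ⟨n, hn, rfl⟩ := (hmem_orb x _).mp hy
    ext z
    rw [hmem_orb, hmem_orb]
    constructor
    · rintro ⟨m, hm, rfl⟩
      exact ⟨m * n⁻¹, N.mul_mem hm (N.inv_mem hn), by simp [Equiv.Perm.mul_apply]⟩
    · rintro ⟨m, hm, rfl⟩
      exact ⟨m * n, N.mul_mem hm hn, by simp [Equiv.Perm.mul_apply]⟩
  set P : Set (Set Ω) := Set.range orb with hP
  have hpart : Setoid.IsPartition P := by
    constructor
    · rintro ⟨x, hx⟩
      exact absurd (hx ▸ hself x) (Set.notMem_empty x)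
    · intro a
      refine ⟨orb a, ⟨⟨a, rfl⟩, hself a⟩, ?_⟩
      rintro B ⟨⟨y, rfl⟩, haB⟩
      exact horb_eq y a haB
  have himg : ∀ g ∈ G, ∀ x, ⇑g '' orb x = orb (g x) := by
    intro g hg x
    ext z
    constructor
    · rintro ⟨w, hw, rfl⟩
      obtain ⟨m, hm, rfl⟩ := (hmem_orb x w).mp hw
      exact (hmem_orb _ _).mpr ⟨g * m * g⁻¹, hNnorm g hg m hm, by simp [Equiv.Perm.mul_apply]⟩
    · intro hz
      obtain ⟨m, hm, rfl⟩ := (hmem_orb _ z).mp hz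
      exact ⟨(g⁻¹ * m * g) x, (hmem_orb x _).mpr ⟨g⁻¹ * m * g, hNnorm g⁻¹ (inv_mem hg) m hm, rfl⟩,
        by simp [Equiv.Perm.mul_apply]⟩
  have hstab : ∀ g ∈ G, ∀ B ∈ P, ⇑g '' B ∈ P := by
    rintro g hg B ⟨x, rfl⟩
    exact ⟨g x, (himg g hg x).symm⟩
  have hdisj : P.ncard ≤ 1 ∨ ∀ B ∈ P, B.ncard ≤ 1 := by
    by_contra h
    push_neg at h
    exact hprim.2 ⟨P, hpart, h.1, h.2, hstab⟩
  -- not all orbits singletons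
  have htrans : ∀ x y : Ω, ∃ n ∈ N, n x = y := by
    rcases hdisj with h | h
    · intro x y
      have hxy : orb x = orb y := by
        by_contra hne
        have h2 : 1 < P.ncard := by
          rw [Set.one_lt_ncard_iff (Set.toFinite P)]
          exact ⟨orb x, orb y, ⟨x, rfl⟩, ⟨y, rfl⟩, hne⟩
        omega
      exact (hmem_orb x y).mp (hxy ▸ hself y)
    · exfalso
      apply hNbot
      rw [Subgroup.eq_bot_iff_forall]
      intro n hn
      ext x
      by_contra hne
      have h2 : 1 < (orb x).ncard := by
        rw [Set.one_lt_ncard_iff (Set.toFinite _)]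
        exact ⟨n x, x, (hmem_orb x _).mpr ⟨n, hn, rfl⟩, hself x, by simpa using hne⟩
      exact absurd (h (orb x) ⟨x, rfl⟩) (by omega)
  have hfree : ∀ n ∈ N, ∀ x : Ω, n x = x → n = 1 := by
    intro n hn x hx
    ext z
    obtain ⟨p, hp, rfl⟩ := htrans x z
    have : (n * p) x = (p * n) x := by rw [habel n hn p hp]
    simpa [Equiv.Perm.mul_apply, hx] using this
  have hreg : ∀ x y : Ω, ∃! g : Equiv.Perm Ω, g ∈ N ∧ g x = y := by
    intro x y
    obtain ⟨n, hn, hnx⟩ := htrans x y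
    refine ⟨n, ⟨hn, hnx⟩, ?_⟩
    rintro m ⟨hm, hmx⟩
    have h1 : (n⁻¹ * m) x = x := by simp [Equiv.Perm.mul_apply, hmx, ← hnx]
    have h2 : n⁻¹ * m = 1 := hfree _ (N.mul_mem (N.inv_mem hn) hm) x h1
    calc m = n * (n⁻¹ * m) := by group
    _ = n := by rw [h2, mul_one]
  -- cardinality
  have hne : Nonempty Ω := by
    rcases isEmpty_or_nonempty Ω with h | h
    · simp [Nat.card_of_isEmpty] at hΩ
    · exact h
  obtain ⟨x₀⟩ := hne
  have hbij : Function.Bijective (fun n : ↥N => (n : Equiv.Perm Ω) x₀) := by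
    constructor
    · intro n m hnm
      obtain ⟨g, -, hu⟩ := hreg x₀ ((n : Equiv.Perm Ω) x₀)
      have h1 := hu n ⟨n.2, rfl⟩
      have h2 := hu m ⟨m.2, hnm.symm⟩
      exact Subtype.ext (h1.trans h2.symm)
    · intro y
      obtain ⟨n, hn, hnx⟩ := htrans x₀ y
      exact ⟨⟨n, hn⟩, hnx⟩
  have hcardeq : Nat.card ↥N = Nat.card Ω := Nat.card_eq_of_bijective _ hbij
  have hpN : IsPGroup l ↥N := by
    intro g
    refine ⟨1, ?_⟩
    rw [pow_one]
    have h1 := hpowl (g : Equiv.Perm Ω) g.2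
    exact Subtype.ext (by simp [Subgroup.coe_pow, h1])
  obtain ⟨k, hk⟩ := IsPGroup.iff_card.mp hpN
  have hkpos : 0 < k := by
    by_contra h
    push_neg at h
    interval_cases k
    rw [pow_zero] at hk
    omega
  exact ⟨l, hl, horder, habel, hreg, k, hkpos, hk, by rw [← hcardeq, hk]⟩
end

section
/- Let F be a field and E a finite separable extension of F which is primitive (the only intermediate fields F ⊆ K ⊆ E are K = F and K = E, and [E:F] > 1) and solvable over F (the Galois group Gal(D|F) of the Galois closure D of E over F is a solvable group). Then [E:F] = l^n for some prime l and some integer n > 0. -/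
universe u

private lemma aux_index_dvd {G : Type*} [Group G] (H P : Subgroup G) [P.Normal]
    (hsup : H ⊔ P = ⊤) : H.index ∣ Nat.card P := by
  suffices h : H.index = (H.subgroupOf P).index by
    rw [h]; exact Subgroup.index_dvd_card _
  rw [Subgroup.index_eq_card, Subgroup.index_eq_card]
  apply Nat.card_congr
  symm
  refine Equiv.ofBijective
    (fun x => Quotient.map' (Subtype.val : P → G) (fun a b hab => ?_) x) ⟨?_, ?_⟩
  · rw [QuotientGroup.leftRel_apply] at hab ⊢
    simpa [Subgroup.mem_subgroupOf] using hab
  · intro x y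
    refine Quotient.inductionOn₂' x y (fun a b h => ?_)
    simp only [Quotient.map'_mk''] at h
    apply Quotient.sound'
    rw [QuotientGroup.leftRel_apply]
    have := QuotientGroup.leftRel_apply.mp (Quotient.exact' h)
    simpa [Subgroup.mem_subgroupOf] using this
  · intro x
    refine Quotient.inductionOn' x (fun g => ?_)
    have hg : g ∈ (↑(P ⊔ H) : Set G) := by
      rw [sup_comm] at hsup
      rw [hsup]; trivial
    rw [Subgroup.normal_mul] at hg
    obtain ⟨p, hp, h, hh, rfl⟩ := hg
    refine ⟨Quotient.mk'' ⟨p, hp⟩, ?_⟩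
    simp only [Quotient.map'_mk'']
    apply Quotient.sound'
    rw [QuotientGroup.leftRel_apply]
    simpa using hh

open scoped commutatorElement in
private theorem key_group (n : ℕ) : ∀ (G : Type u) [Group G] [Finite G] [Group.IsSolvable G],
    Nat.card G = n → ∀ H : Subgroup G, H ≠ ⊤ →
    (∀ K : Subgroup G, H ≤ K → K = H ∨ K = ⊤) →
    ∃ p m : ℕ, p.Prime ∧ 0 < m ∧ H.index = p ^ m := by
  induction n using Nat.strong_induction_on with
  | _ n ih =>
  intro G _ _ _ hcard H hne hmax
  have hidx1 : 1 < H.index := Subgroup.one_lt_index_of_ne_top hne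
  have hG1 : 1 < Nat.card G :=
    lt_of_lt_of_le hidx1 (Nat.le_of_dvd Nat.card_pos (Subgroup.index_dvd_card H))
  have hnt : Nontrivial G := Finite.one_lt_card_iff_nontrivial.mp hG1
  have hex : ∃ m, derivedSeries G m = ⊥ := Group.IsSolvable.solvable
  classical
  set k := Nat.find hex with hkdef
  have hk : derivedSeries G k = ⊥ := Nat.find_spec hex
  have hk0 : k ≠ 0 := by
    intro h
    rw [h, derivedSeries_zero] at hk
    obtain ⟨x, hx⟩ := exists_ne (1 : G)
    have hxmem : x ∈ (⊥ : Subgroup G) := hk ▸ trivial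
    exact hx (Subgroup.mem_bot.mp hxmem)
  set N := derivedSeries G (k - 1) with hNdef
  have hNbot : N ≠ ⊥ := Nat.find_min hex (Nat.sub_lt (Nat.pos_of_ne_zero hk0) one_pos)
  have hNN : ⁅N, N⁆ = ⊥ := by
    have : derivedSeries G (k - 1 + 1) = ⊥ := by
      rwa [Nat.sub_add_cancel (Nat.one_le_iff_ne_zero.mpr hk0)]
    rwa [derivedSeries_succ] at this
  haveI hNnormal : N.Normal := derivedSeries_normal G (k - 1)
  have hcomm : ∀ a b : N, a * b = b * a := by
    intro a b
    have h1 : ⁅(a : G), (b : G)⁆ ∈ ⁅N, N⁆ := Subgroup.commutator_mem_commutator a.2 b.2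
    rw [hNN, Subgroup.mem_bot] at h1
    exact Subtype.ext (commutatorElement_eq_one_iff_mul_comm.mp h1)
  haveI : Nontrivial N := (Subgroup.nontrivial_iff_ne_bot N).mpr hNbot
  have hcN : Nat.card N ≠ 1 := by
    have := Finite.one_lt_card (α := N)
    omega
  obtain ⟨p, hp, hpdvd⟩ := Nat.exists_prime_and_dvd hcN
  haveI : Fact p.Prime := ⟨hp⟩
  obtain ⟨Q⟩ : Nonempty (Sylow p N) := Sylow.nonempty
  have hQnormal : (Q : Subgroup N).Normal := by
    constructor
    intro x hx g
    have : g * x * g⁻¹ = x := by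
      rw [hcomm g x, mul_assoc, mul_inv_cancel, mul_one]
    rwa [this]
  haveI : (Q : Subgroup N).Characteristic := Sylow.characteristic_of_normal Q hQnormal
  set P : Subgroup G := (Q : Subgroup N).map N.subtype with hPdef
  haveI hPnormal : P.Normal := inferInstance
  obtain ⟨t, hQcard⟩ : ∃ t, Nat.card (Q : Subgroup N) = p ^ t := Q.2.exists_card_eq
  have hPQ : Nat.card P = Nat.card (Q : Subgroup N) :=
    (Nat.card_congr ((Q : Subgroup N).equivMapOfInjective N.subtype N.subtype_injective).toEquiv).symm
  have hQ1 : 1 < Nat.card (Q : Subgroup N) := by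
    have hmult := Sylow.card_eq_multiplicity Q
    have hpos : 0 < (Nat.card N).factorization p :=
      hp.factorization_pos_of_dvd (Nat.card_pos).ne' hpdvd
    rw [hmult]
    calc 1 = p ^ 0 := (pow_zero p).symm
    _ < p ^ (Nat.card N).factorization p :=
      Nat.pow_lt_pow_right hp.one_lt (by omega)
  by_cases hPH : P ≤ H
  · -- quotient case
    set π := QuotientGroup.mk' P with hπdef
    have hker : π.ker = P := QuotientGroup.ker_mk' P
    have hsurj : Function.Surjective π := QuotientGroup.mk'_surjective P
    set H' := H.map π with hH'def
    have hcomap : H'.comap π = H := by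
      rw [hH'def, Subgroup.comap_map_eq, hker, sup_eq_left.mpr hPH]
    have hlt : Nat.card (G ⧸ P) < n := by
      have h1 : Nat.card G = Nat.card (G ⧸ P) * Nat.card P :=
        Subgroup.card_eq_card_quotient_mul_card_subgroup P
      have h2 : 1 < Nat.card P := by rw [hPQ]; exact hQ1
      have h3 : 0 < Nat.card (G ⧸ P) := Nat.card_pos
      nlinarith [hcard]
    have hne' : H' ≠ ⊤ := by
      intro h
      apply hne
      rw [← hcomap, h, Subgroup.comap_top]
    have hmax' : ∀ K' : Subgroup (G ⧸ P), H' ≤ K' → K' = H' ∨ K' = ⊤ := by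
      intro K' hK'
      have hHK : H ≤ K'.comap π := by
        rw [← hcomap]; exact Subgroup.comap_mono hK'
      rcases hmax _ hHK with h | h
      · left
        rw [← Subgroup.map_comap_eq_self_of_surjective hsurj K', h, hH'def]
      · right
        rw [← Subgroup.map_comap_eq_self_of_surjective hsurj K', h]
        rw [eq_top_iff]
        intro x _
        obtain ⟨y, rfl⟩ := hsurj x
        exact ⟨y, trivial, rfl⟩
    obtain ⟨p', m, hp', hm, hidx⟩ := ih _ hlt (G ⧸ P) rfl H' hne' hmax'
    refine ⟨p', m, hp', hm, ?_⟩
    have : H'.index = H.index := by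
      rw [hH'def, Subgroup.index_map, hker, sup_eq_left.mpr hPH]
      have hrange : π.range.index = 1 := by
        rw [Subgroup.index_eq_one, MonoidHom.range_eq_top]
        exact hsurj
      rw [hrange, mul_one]
    rw [← this, hidx]
  · -- sup case
    have hsup : H ⊔ P = ⊤ := by
      rcases hmax (H ⊔ P) le_sup_left with h | h
      · exact absurd (le_sup_right.trans h.le) hPH
      · exact h
    have hdvd : H.index ∣ p ^ t := by
      have := aux_index_dvd H P hsup
      rwa [hPQ, hQcard] at this
    obtain ⟨m, hmt, hEq⟩ := (Nat.dvd_prime_pow hp).mp hdvd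
    refine ⟨p, m, hp, ?_, hEq⟩
    rcases Nat.eq_zero_or_pos m with h0 | h0
    · rw [h0, pow_zero] at hEq; omega
    · exact h0

theorem stmt4 {F D : Type*} [Field F] [Field D] [Algebra F D]
    [FiniteDimensional F D] [IsGalois F D]
    (E : IntermediateField F D) (hE : 1 < Module.finrank F E)
    (hclos : IntermediateField.normalClosure F E D = ⊤)
    (hprim : ∀ K : IntermediateField F D, K ≤ E → K = ⊥ ∨ K = E)
    (hsolv : IsSolvable (D ≃ₐ[F] D)) :
    ∃ l n : ℕ, l.Prime ∧ 0 < n ∧ Module.finrank F E = l ^ n := by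
  classical
  set H := E.fixingSubgroup with hHdef
  have hNcard : Nat.card H = Module.finrank E D := by
    exact IsGalois.card_fixingSubgroup_eq_finrank E
  have hGcard : Nat.card (D ≃ₐ[F] D) = Module.finrank F D := by
    exact IsGalois.card_aut_eq_finrank F D
  have hpos : 0 < Module.finrank E D := Module.finrank_pos
  have hidx : H.index = Module.finrank F E := by
    have h1 := Subgroup.index_mul_card H
    rw [hNcard, hGcard, ← Module.finrank_mul_finrank F E D] at h1
    exact Nat.eq_of_mul_eq_mul_right hpos h1
  have hne : H ≠ ⊤ := by
    intro h
    rw [h, Subgroup.index_top] at hidx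
    omega
  have hmax : ∀ S : Subgroup (D ≃ₐ[F] D), H ≤ S → S = H ∨ S = ⊤ := by
    intro S hS
    have hfix : IntermediateField.fixingSubgroup (IntermediateField.fixedField S) = S :=
      IntermediateField.fixingSubgroup_fixedField S
    have hKE : IntermediateField.fixedField S ≤ E := by
      rw [← IsGalois.fixedField_fixingSubgroup E]
      apply (IntermediateField.le_iff_le _ _).mpr
      rw [hfix]
      exact hS
    rcases hprim _ hKE with h | h
    · right
      rw [h, IntermediateField.fixingSubgroup_bot] at hfix
      exact hfix.symm
    · left
      rw [h] at hfix
      exact hfix.symm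
  haveI : Group.IsSolvable (D ≃ₐ[F] D) := hsolv
  obtain ⟨p, m, hp, hm, h⟩ := key_group (Nat.card (D ≃ₐ[F] D)) (D ≃ₐ[F] D) rfl H hne hmax
  exact ⟨p, m, hp, hm, by rw [← hidx, h]⟩
end

section
/- Let l be a prime, G a finite solvable group, and M a finite-dimensional F_l-linear representation of G which is faithful (the homomorphism G → GL(M) is injective) and simple (M is nonzero and has no G-stable F_l-subspaces other than 0 and M). Then the group cohomology H^i(G, M) vanishes for every i > 0. -/
open Finset

section GroupTheory
variable {l : ℕ} [Fact l.Prime] {G : Type} [Group G] [Finite G]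
  {M : Type} [AddCommGroup M] [Module (ZMod l) M]
  (ρ : Representation (ZMod l) G M)

/-- The fixed submodule of a subgroup. -/
def fixedSub (H : Subgroup G) : Submodule (ZMod l) M where
  carrier := {w | ∀ h ∈ H, ρ h w = w}
  add_mem' := fun {a b} ha hb h hh => by
    rw [map_add, ha h hh, hb h hh]
  zero_mem' := fun h hh => map_zero _
  smul_mem' := fun c a ha h hh => by
    rw [map_smul, ha h hh]

lemma aux_eq_bot (hfaith : Function.Injective ρ)
    (hsimple : ∀ W : Submodule (ZMod l) M, (∀ g : G, W.map (ρ g) = W) → W = ⊥ ∨ W = ⊤)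
    (H : Subgroup G) (hN : H.Normal) (v : M) (hv : v ≠ 0) (hfix : ∀ h ∈ H, ρ h v = v) :
    H = ⊥ := by
  have hstable : ∀ g : G, (fixedSub ρ H).map (ρ g) = fixedSub ρ H := by
    intro g
    have key : ∀ (g : G), (fixedSub ρ H).map (ρ g) ≤ fixedSub ρ H := by
      intro g w hw
      obtain ⟨u, hu, rfl⟩ := hw
      intro h hh
      have h1 : g⁻¹ * h * g ∈ H := by
        have := hN.conj_mem _ hh g⁻¹
        simpa [mul_assoc] using this
      have := hu _ h1
      calc ρ h (ρ g u) = ρ (h * g) u := by rw [map_mul]; rfl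
        _ = ρ (g * (g⁻¹ * h * g)) u := by group
        _ = ρ g (ρ (g⁻¹ * h * g) u) := by rw [map_mul]; rfl
        _ = ρ g u := by rw [this]
    refine le_antisymm (key g) ?_
    intro w hw
    refine ⟨ρ g⁻¹ w, key g⁻¹ ⟨w, hw, rfl⟩, ?_⟩
    have : ρ g (ρ g⁻¹ w) = ρ (g * g⁻¹) w := by rw [map_mul]; rfl
    simpa using this
  rcases hsimple _ hstable with h | h
  · exact absurd (h ▸ hfix : v ∈ (⊥ : Submodule (ZMod l) M)) (by simpa using hv)
  · rw [Subgroup.eq_bot_iff_forall]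
    intro x hx
    apply hfaith
    ext w
    have hw : w ∈ fixedSub ρ H := h ▸ Submodule.mem_top
    simpa using hw x hx

lemma aux_sum_zero (hfaith : Function.Injective ρ)
    (hsimple : ∀ W : Submodule (ZMod l) M, (∀ g : G, W.map (ρ g) = W) → W = ⊥ ∨ W = ⊤)
    (H : Subgroup G) [Fintype ↥H] (hN : H.Normal) (hbot : H ≠ ⊥) :
    (∑ h : ↥H, ρ (h : G)) = 0 := by
  ext v
  simp only [LinearMap.zero_apply]
  by_contra hv
  refine hbot (aux_eq_bot ρ hfaith hsimple H hN _ hv ?_)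
  intro h hh
  simp only [LinearMap.sum_apply]
  calc ρ h (∑ d : ↥H, ρ (d : G) v) = ∑ d : ↥H, ρ (((⟨h, hh⟩ : ↥H) * d : ↥H) : G) v := by
        rw [map_sum]
        exact Finset.sum_congr rfl fun x _ => by
          rw [Subgroup.coe_mul, map_mul]; rfl
    _ = ∑ d : ↥H, ρ (d : G) v :=
        Fintype.sum_equiv (Equiv.mulLeft (⟨h, hh⟩ : ↥H)) _ _ (fun x => rfl)

open scoped commutatorElement in
lemma aux_exists_N [Group.IsSolvable G] [FiniteDimensional (ZMod l) M]
    (hfaith : Function.Injective ρ)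
    (hM : Nontrivial M)
    (hsimple : ∀ W : Submodule (ZMod l) M, (∀ g : G, W.map (ρ g) = W) → W = ⊥ ∨ W = ⊤)
    (hG : ∃ g : G, g ≠ 1) :
    ∃ N : Subgroup G, N.Normal ∧ N ≠ ⊥ ∧ ¬ (l ∣ Nat.card ↥N) := by
  obtain ⟨g₀, hg₀⟩ := hG
  have hl : (1:ℕ) < l := (Fact.out : l.Prime).one_lt
  have hex : ∃ n, derivedSeries G n = ⊥ := Group.IsSolvable.solvable
  classical
  set n₀ := Nat.find hex with hn₀
  have hbot : derivedSeries G n₀ = ⊥ := Nat.find_spec hex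
  have hn0 : n₀ ≠ 0 := by
    intro h
    rw [h] at hbot
    exact hg₀ ((Subgroup.eq_bot_iff_forall _).1 hbot g₀ (by simp [derivedSeries]))
  obtain ⟨m, hm⟩ : ∃ m, n₀ = m + 1 := ⟨n₀ - 1, (Nat.succ_pred_eq_of_pos (Nat.pos_of_ne_zero hn0)).symm⟩
  rw [hm] at hbot
  set N₀ := derivedSeries G m with hN₀def
  have hN₀norm : N₀.Normal := derivedSeries_normal G m
  have hN₀ : N₀ ≠ ⊥ := Nat.find_min hex (by omega)
  have habel : ∀ x y : G, x ∈ N₀ → y ∈ N₀ → Commute x y := by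
    intro x y hx hy
    rw [← commutatorElement_eq_one_iff_commute]
    have : ⁅x, y⁆ ∈ derivedSeries G (m + 1) :=
      Subgroup.commutator_mem_commutator hx hy
    rw [hbot] at this
    simpa using this
  set q := l ^ Nat.card G with hq
  by_cases hcase : ∀ x ∈ N₀, x ^ q = 1
  · -- N₀ is an l-group: contradiction via fixed points
    exfalso
    haveI : NeZero l := ⟨(Fact.out : l.Prime).pos.ne'⟩
    haveI : Finite M := Module.finite_of_finite (ZMod l)
    letI : MulAction ↥N₀ M :=
      { smul := fun n v => ρ (n : G) v
        one_smul := fun v => by show ρ _ v = v; simp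
        mul_smul := fun a b v => by
          show ρ _ v = ρ _ (ρ _ v)
          rw [Subgroup.coe_mul, map_mul]; rfl }
    have hsmul : ∀ (n : ↥N₀) (v : M), n • v = ρ (n : G) v := fun _ _ => rfl
    have hP : IsPGroup l ↥N₀ := fun x =>
      ⟨Nat.card G, Subtype.ext (by push_cast; exact hcase _ x.2)⟩
    have hmod := hP.card_modEq_card_fixedPoints M
    have hdvdM : l ∣ Nat.card M := by
      haveI : Fintype M := Fintype.ofFinite M
      rw [Nat.card_eq_fintype_card, Module.card_eq_pow_finrank (K := ZMod l) (V := M), ZMod.card]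
      exact dvd_pow_self l (Module.finrank_pos (R := ZMod l) (M := M)).ne'
    have hdvdF : l ∣ Nat.card (MulAction.fixedPoints ↥N₀ M) := by
      have h0 : Nat.card M ≡ 0 [MOD l] := (Nat.modEq_zero_iff_dvd).2 hdvdM
      exact (Nat.modEq_zero_iff_dvd).1 (hmod.symm.trans h0)
    have h0mem : (0 : M) ∈ MulAction.fixedPoints ↥N₀ M := fun n => map_zero (ρ (n : G))
    have hpos : 0 < Nat.card (MulAction.fixedPoints ↥N₀ M) :=
      Nat.card_pos_iff.2 ⟨⟨⟨0, h0mem⟩⟩, inferInstance⟩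
    have h1lt : 1 < Nat.card (MulAction.fixedPoints ↥N₀ M) := by
      rcases hdvdF with ⟨c, hc⟩
      have : c ≠ 0 := by rintro rfl; simp [hc] at hpos
      nlinarith [Nat.one_le_iff_ne_zero.2 this]
    obtain ⟨a, b, hab⟩ := Finite.one_lt_card_iff_nontrivial.1 h1lt
    have hvex : ∃ v : M, v ≠ 0 ∧ v ∈ MulAction.fixedPoints ↥N₀ M := by
      by_cases ha : (a : M) = 0
      · exact ⟨b, by
          intro hb0
          exact hab (Subtype.ext (by rw [ha, hb0])), b.2⟩
      · exact ⟨a, ha, a.2⟩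
    obtain ⟨v, hv, hvfix⟩ := hvex
    refine hN₀ (aux_eq_bot ρ hfaith hsimple N₀ hN₀norm v hv ?_)
    intro h hh
    exact hvfix ⟨h, hh⟩
  · push_neg at hcase
    obtain ⟨x₁, hx₁N, hx₁⟩ := hcase
    have hmapmul : ∀ x y : ↥N₀, ((x * y : ↥N₀) : G) ^ q = (x:G) ^ q * (y:G) ^ q := by
      intro x y
      exact (habel _ _ x.2 y.2).mul_pow q
    let f : ↥N₀ →* G :=
      { toFun := fun x => (x : G) ^ q
        map_one' := one_pow q
        map_mul' := hmapmul }
    refine ⟨f.range, ?_, ?_, ?_⟩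
    · constructor
      rintro n ⟨x, rfl⟩ g
      refine ⟨⟨g * (x:G) * g⁻¹, hN₀norm.conj_mem _ x.2 g⟩, ?_⟩
      show (g * (x:G) * g⁻¹) ^ q = g * (x:G) ^ q * g⁻¹
      exact conj_pow ..
    · intro h
      refine hx₁ ?_
      have : f ⟨x₁, hx₁N⟩ ∈ f.range := ⟨_, rfl⟩
      rw [h] at this
      exact Subgroup.mem_bot.1 this
    · intro hdvd
      haveI : Fintype ↥f.range := Fintype.ofFinite _
      rw [Nat.card_eq_fintype_card] at hdvd
      obtain ⟨y, hy⟩ := exists_prime_orderOf_dvd_card l hdvd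
      have hyG : orderOf (y : G) = l := by
        rw [← hy]
        exact (orderOf_injective f.range.subtype Subtype.coe_injective y)
      obtain ⟨x₀, hx₀⟩ := y.2
      set d := orderOf (x₀ : G) with hd
      have hdne : d ≠ 0 := (orderOf_pos _).ne'
      have hcard : Nat.card G ≠ 0 := Nat.card_pos.ne'
      have hqne : q ≠ 0 := pow_ne_zero _ (by omega)
      have hdvdcard : d ∣ Nat.card G := orderOf_dvd_natCard _
      have hvle : d.factorization l ≤ Nat.card G := by
        have h1 : l ^ d.factorization l ∣ d := Nat.ordProj_dvd d l
        have h2 : l ^ d.factorization l ≤ Nat.card G :=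
          Nat.le_of_dvd Nat.card_pos (h1.trans hdvdcard)
        have h3 : d.factorization l < l ^ d.factorization l :=
          Nat.lt_pow_self hl
        omega
      have horder : orderOf ((x₀:G) ^ q) = d / d.gcd q := orderOf_pow _
      have hcoe : ((y : G)) = (x₀ : G) ^ q := by rw [← hx₀]; rfl
      have hld : l = d / d.gcd q := by rw [← hyG, hcoe, horder]
      have hgcdd : d.gcd q ∣ d := Nat.gcd_dvd_left _ _
      have hfact : (d / d.gcd q).factorization l = 0 := by
        rw [Nat.factorization_div hgcdd]
        simp only [Finsupp.coe_tsub, Pi.sub_apply]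
        rw [Nat.factorization_gcd hdne hqne]
        simp only [Finsupp.inf_apply]
        rw [hq, Nat.Prime.factorization_pow (Fact.out : l.Prime)]
        simp only [Finsupp.single_eq_same]
        omega
      rw [← hld] at hfact
      rw [Nat.Prime.factorization_self (Fact.out : l.Prime)] at hfact
      exact one_ne_zero hfact
end GroupTheory
open CategoryTheory
noncomputable section
variable {k G : Type} [CommRing k] [Group G] (N : Subgroup G) [Fintype ↥N] (hN : N.Normal) (c : k)

include hN in
lemma eHom_comm_aux (B : Rep k G) (g : G) :
    (c • ∑ n : ↥N, B.ρ (n : G)).comp (B.ρ g) = (B.ρ g).comp (c • ∑ n : ↥N, B.ρ (n : G)) := by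
  ext v
  simp only [LinearMap.comp_apply, LinearMap.smul_apply, LinearMap.sum_apply, map_smul, map_sum]
  congr 1
  have key : ∀ n : ↥N, B.ρ (n : G) (B.ρ g v) = B.ρ ((n : G) * g) v := fun n => by
    rw [map_mul]; rfl
  have key2 : ∀ n : ↥N, B.ρ g (B.ρ (n : G) v) = B.ρ (g * (n : G)) v := fun n => by
    rw [map_mul]; rfl
  simp only [key, key2]
  let eqv : ↥N ≃ ↥N :=
    { toFun := fun n => ⟨g * (n : G) * g⁻¹, hN.conj_mem _ n.2 g⟩
      invFun := fun n => ⟨g⁻¹ * (n : G) * g, by simpa [mul_assoc] using hN.conj_mem _ n.2 g⁻¹⟩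
      left_inv := fun n => Subtype.ext (by group)
      right_inv := fun n => Subtype.ext (by group) }
  rw [← Equiv.sum_comp eqv (fun n => B.ρ ((n : G) * g) v)]
  refine Finset.sum_congr rfl fun n _ => ?_
  show B.ρ ((g * (n : G) * g⁻¹) * g) v = B.ρ (g * (n : G)) v
  congr 1
  group

/-- The averaging endomorphism attached to a normal subgroup. -/
def eHom (B : Rep k G) : B ⟶ B :=
  ConcreteCategory.ofHom (C := Rep k G)
    ⟨c • ∑ n : ↥N, B.ρ (n : G), fun g => eHom_comm_aux N hN c B g⟩

lemma eHom_natural {B B' : Rep k G} (f : B ⟶ B') :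
    eHom N hN c B ≫ f = f ≫ eHom N hN c B' := by
  apply Rep.hom_ext
  show f.hom.comp (eHom N hN c B).hom = (eHom N hN c B').hom.comp f.hom
  ext v
  show f.hom ((c • ∑ n : ↥N, B.ρ (n : G)) v) = (c • ∑ n : ↥N, B'.ρ (n : G)) (f.hom v)
  simp only [LinearMap.smul_apply, LinearMap.sum_apply, map_smul, map_sum]
  congr 1
  exact Finset.sum_congr rfl fun n _ => Rep.hom_comm_apply f _ v

lemma eHom_of_trivial (B : Rep k G) (hB : ∀ g : G, B.ρ g = 1)
    (hc : c * (Fintype.card ↥N : k) = 1) :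
    eHom N hN c B = 𝟙 B := by
  apply Rep.hom_ext
  apply Representation.IntertwiningMap.ext
  show (c • ∑ n : ↥N, B.ρ (n : G)) = LinearMap.id
  ext v
  simp only [LinearMap.smul_apply, LinearMap.sum_apply, LinearMap.id_apply]
  simp only [hB, Module.End.one_apply]
  rw [Finset.sum_const, Finset.card_univ, ← Nat.cast_smul_eq_nsmul k, smul_smul, hc, one_smul]

lemma eHom_zero (B : Rep k G) (hB : (∑ n : ↥N, B.ρ (n : G)) = 0) :
    eHom N hN c B = 0 := by
  apply Rep.hom_ext
  apply Representation.IntertwiningMap.ext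
  show (c • ∑ n : ↥N, B.ρ (n : G)) = 0
  rw [hB, smul_zero]

/-- The averaging chain map on the standard resolution. -/
def etaChain : (Rep.standardComplex k G) ⟶ (Rep.standardComplex k G) where
  f i := eHom N hN c _
  comm' i j _ := by
    exact eHom_natural N hN c ((Rep.standardComplex k G).d i j)

end

noncomputable section
variable {k G : Type} [CommRing k] [Group G] (N : Subgroup G) [Fintype ↥N] (hN : N.Normal) (c : k)
open groupCohomology

lemma eta_pi (hc : c * (Fintype.card ↥N : k) = 1) :
    etaChain N hN c ≫ (Rep.standardResolution k G).π =
      (Rep.standardResolution k G).π := by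
  apply HomologicalComplex.hom_ext
  intro i
  match i with
  | 0 =>
    show (etaChain N hN c).f 0 ≫ (Rep.standardResolution k G).π.f 0 = _
    have h1 := eHom_natural N hN c ((Rep.standardResolution k G).π.f 0)
    have h2 : eHom N hN c (((ChainComplex.single₀ (Rep k G)).obj (Rep.trivial k G k)).X 0) =
        𝟙 _ := by
      refine eHom_of_trivial N hN c _ (fun g => ?_) hc
      rfl
    exact h1.trans (by rw [h2, Category.comp_id])
  | (n+1) =>
    apply (HomologicalComplex.isZero_single_obj_X
      (ComplexShape.down ℕ) 0 (Rep.trivial k G k) (n+1) (by omega)).eq_of_tgt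

lemma subsingleton_homology
    (A : Rep k G) (hc : c * (Fintype.card ↥N : k) = 1)
    (hzero : eHom N hN c A = 0) (m : ℕ) :
    Subsingleton (groupCohomology A (m + 1)) := by
  have H : Homotopy (etaChain N hN c) (𝟙 (Rep.standardComplex k G)) := by
    refine ProjectiveResolution.liftHomotopy (𝟙 (Rep.trivial k G k))
      (P := Rep.standardResolution k G)
      (Q := Rep.standardResolution k G) _ _ ?_ ?_
    · rw [CategoryTheory.Functor.map_id, Category.comp_id]
      exact eta_pi N hN c hc
    · rw [CategoryTheory.Functor.map_id, Category.comp_id]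
      exact Category.id_comp _
  set D := (Rep.standardComplex k G).linearYonedaObj k A with hD
  have hexact : D.ExactAt (m + 1) := by
    rw [D.exactAt_iff' m (m+1) (m+2) (by simp) (by simp)]
    rw [ShortComplex.moduleCat_exact_iff]
    intro φ hφ
    -- φ is a morphism (resolution k G).X (m+1) ⟶ A
    let φ' : (Rep.standardComplex k G).X (m+1) ⟶ A := φ
    have hφ' : (Rep.standardComplex k G).d (m+2) (m+1) ≫ φ' = 0 := hφ
    have hcomm := H.comm (m+1)
    have h1 : dNext (m+1) H.hom =
        (Rep.standardComplex k G).d (m+1) m ≫ H.hom m (m+1) :=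
      dNext_eq H.hom (by simp)
    have h2 : prevD (m+1) H.hom =
        H.hom (m+1) (m+2) ≫ (Rep.standardComplex k G).d (m+2) (m+1) :=
      prevD_eq H.hom (by simp)
    have key : (etaChain N hN c).f (m+1) ≫ φ' = 0 := by
      have hnat := eHom_natural N hN c φ'
      have : (etaChain N hN c).f (m+1) = eHom N hN c ((Rep.standardComplex k G).X (m+1)) :=
        rfl
      rw [this, hnat, hzero, Limits.comp_zero]
    rw [hcomm] at key
    rw [HomologicalComplex.id_f, Preadditive.add_comp, Preadditive.add_comp, h1, h2,
      Category.assoc, Category.assoc, hφ', Limits.comp_zero, add_zero] at key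
    have h3 : 𝟙 ((Rep.standardComplex k G).X (m+1)) ≫ φ' = φ' :=
      Category.id_comp φ'
    rw [h3] at key
    refine ⟨-(H.hom m (m+1) ≫ φ'), ?_⟩
    show (Rep.standardComplex k G).d (m+1) m ≫ (-(H.hom m (m+1) ≫ φ')) = φ'
    have hk2 : φ' = -((Rep.standardComplex k G).d (m+1) m ≫ (H.hom m (m+1) ≫ φ')) :=
      eq_neg_of_add_eq_zero_left ((add_comm _ _).trans key)
    rw [Preadditive.comp_neg]
    exact hk2.symm

  have hzero' : Limits.IsZero (D.homology (m+1)) :=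
    (HomologicalComplex.exactAt_iff_isZero_homology _ _).1 hexact
  have iso : groupCohomology A (m+1) ≅ D.homology (m+1) :=
    groupCohomologyIsoExt A (m+1) ≪≫ Rep.standardResolution.extIso k G A (m+1)
  have hz2 : Limits.IsZero (groupCohomology A (m+1)) := hzero'.of_iso iso
  have hid : 𝟙 (groupCohomology A (m+1)) = 0 := hz2.eq_of_src _ _
  constructor
  intro a b
  calc a = (𝟙 (groupCohomology A (m+1)) : groupCohomology A (m+1) ⟶ _) a := rfl
    _ = (0 : groupCohomology A (m+1) ⟶ _) a := by rw [hid]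
    _ = (𝟙 (groupCohomology A (m+1)) : groupCohomology A (m+1) ⟶ _) b := by rw [hid]; rfl
    _ = b := rfl
end
open CategoryTheory
noncomputable section

lemma subsingleton_of_trivial_group {k G : Type} [CommRing k] [Group G] [Subsingleton G]
    (A : Rep k G) (m : ℕ) : Subsingleton (groupCohomology A (m + 1)) := by
  haveI : Unique G := ⟨⟨1⟩, fun a => Subsingleton.elim a 1⟩
  have hz : Limits.IsZero (groupCohomology A (m + 1)) :=
    isZero_groupCohomology_succ_of_subsingleton A m
  have hid : 𝟙 (groupCohomology A (m+1)) = 0 := hz.eq_of_src _ _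
  constructor
  intro a b
  calc a = (𝟙 (groupCohomology A (m+1)) : groupCohomology A (m+1) ⟶ _) a := rfl
    _ = (0 : groupCohomology A (m+1) ⟶ _) a := by rw [hid]
    _ = (𝟙 (groupCohomology A (m+1)) : groupCohomology A (m+1) ⟶ _) b := by rw [hid]; rfl
    _ = b := rfl
end

theorem stmt5 (l : ℕ) [Fact l.Prime] {G : Type} [Group G] [Finite G] [Group.IsSolvable G]
    {M : Type} [AddCommGroup M] [Module (ZMod l) M] [FiniteDimensional (ZMod l) M]
    (ρ : Representation (ZMod l) G M)
    (hfaith : Function.Injective ρ)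
    (hM : Nontrivial M)
    (hsimple : ∀ W : Submodule (ZMod l) M, (∀ g : G, W.map (ρ g) = W) → W = ⊥ ∨ W = ⊤) :
    ∀ i : ℕ, 0 < i → Subsingleton (groupCohomology (Rep.of ρ) i) := by
  intro i hi
  obtain ⟨m, rfl⟩ : ∃ m, i = m + 1 := ⟨i - 1, by omega⟩
  by_cases hG : ∀ g : G, g = 1
  · haveI : Subsingleton G := ⟨fun a b => (hG a).trans (hG b).symm⟩
    exact subsingleton_of_trivial_group _ m
  · push_neg at hG
    obtain ⟨N, hNnorm, hNbot, hNcard⟩ := aux_exists_N ρ hfaith hM hsimple hG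
    haveI : Fintype ↥N := Fintype.ofFinite _
    haveI : NeZero l := ⟨(Fact.out : l.Prime).pos.ne'⟩
    have hcard0 : ((Fintype.card ↥N : ℕ) : ZMod l) ≠ 0 := by
      rw [Ne, ZMod.natCast_eq_zero_iff]
      rwa [← Nat.card_eq_fintype_card]
    have hc : ((Fintype.card ↥N : ℕ) : ZMod l)⁻¹ * ((Fintype.card ↥N : ℕ) : ZMod l) = 1 :=
      inv_mul_cancel₀ hcard0
    have hsum : (∑ n : ↥N, ρ (n : G)) = 0 := aux_sum_zero ρ hfaith hsimple N hNnorm hNbot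
    have hzero : eHom N hNnorm ((Fintype.card ↥N : ℕ) : ZMod l)⁻¹ (Rep.of ρ) = 0 :=
      eHom_zero N hNnorm _ (Rep.of ρ) hsum
    exact subsingleton_homology N hNnorm _ (Rep.of ρ) hc hzero m
end

section
/- Let l be a prime, G a finite solvable group of order > 1, M a faithful simple F_l[G]-module, and N a minimal normal subgroup of G. Then l does not divide the order of N, and the submodule M^N of N-fixed vectors is zero, i.e. the only m ∈ M with n·m = m for all n ∈ N is m = 0. -/
theorem stmt6 (l : ℕ) [Fact l.Prime] {G : Type*} [Group G] [Finite G] [Group.IsSolvable G]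
    (hG : 1 < Nat.card G)
    {M : Type*} [AddCommGroup M] [Module (ZMod l) M] [FiniteDimensional (ZMod l) M]
    (ρ : Representation (ZMod l) G M)
    (hfaith : Function.Injective ρ) (hM : Nontrivial M)
    (hsimple : ∀ W : Submodule (ZMod l) M, (∀ g : G, W.map (ρ g) = W) → W = ⊥ ∨ W = ⊤)
    (N : Subgroup G) [N.Normal] (hN : N ≠ ⊥)
    (hmin : ∀ N' : Subgroup G, N'.Normal → N' ≠ ⊥ → N' ≤ N → N' = N) :
    ¬ (l ∣ Nat.card N) ∧ ∀ m : M, (∀ n ∈ N, ρ n m = m) → m = 0 := by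
  have hl : l.Prime := Fact.out
  -- The submodule of N-fixed vectors
  set W : Submodule (ZMod l) M :=
    { carrier := {m | ∀ n ∈ N, ρ n m = m}
      add_mem' := fun {a b} ha hb n hn => by
        rw [map_add, ha n hn, hb n hn]
      zero_mem' := fun n hn => by rw [map_zero]
      smul_mem' := fun c a ha n hn => by
        rw [map_smul, ha n hn] } with hWdef
  have hmemW : ∀ m : M, m ∈ W ↔ ∀ n ∈ N, ρ n m = m := fun m => Iff.rfl
  -- W is G-stable
  have key : ∀ g : G, W.map (ρ g) ≤ W := by
    rintro g m ⟨m, hmW, rfl⟩ n hn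
    have hn' : g⁻¹ * n * g ∈ N := Subgroup.Normal.conj_mem' ‹N.Normal› n hn g
    have h1 : ρ n (ρ g m) = ρ (n * g) m := by rw [map_mul]; rfl
    have h2 : ρ (n * g) m = ρ g (ρ (g⁻¹ * n * g) m) := by
      rw [← Module.End.mul_apply, ← map_mul]
      congr 1
      group
    rw [h1, h2, hmW _ hn']
  have hWst : ∀ g : G, W.map (ρ g) = W := by
    intro g
    refine le_antisymm (key g) ?_
    intro m hm
    refine ⟨ρ g⁻¹ m, key g⁻¹ ⟨m, hm, rfl⟩, ?_⟩
    rw [← Module.End.mul_apply, ← map_mul, mul_inv_cancel, map_one, Module.End.one_apply]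
  -- W ≠ ⊤
  have hWne : W ≠ ⊤ := by
    intro h
    apply hN
    rw [eq_bot_iff]
    intro n hn
    have hρn : ρ n = ρ 1 := by
      rw [map_one]
      ext m
      have hm : m ∈ W := h ▸ Submodule.mem_top
      rw [Module.End.one_apply]
      exact hm n hn
    rw [Subgroup.mem_bot]
    exact hfaith hρn
  have hWbot : W = ⊥ := (hsimple W hWst).resolve_right hWne
  have hfix : ∀ m : M, (∀ n ∈ N, ρ n m = m) → m = 0 := by
    intro m hm
    have : m ∈ W := hm
    rw [hWbot, Submodule.mem_bot] at this
    exact this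
  refine ⟨?_, hfix⟩
  intro hd
  -- N is abelian
  have hcomm : ⁅N, N⁆ = ⊥ := by
    by_contra h
    have hle : ⁅N, N⁆ ≤ N := Subgroup.commutator_le_left N N
    have heq : ⁅N, N⁆ = N := hmin ⁅N, N⁆ inferInstance h hle
    have hmap : (commutator ↥N).map N.subtype = ⁅N, N⁆ := by
      rw [commutator_def, Subgroup.map_commutator]
      congr 1 <;> rw [← MonoidHom.range_eq_map, Subgroup.range_subtype]
    have htop : commutator ↥N = ⊤ := by
      apply Subgroup.map_injective N.subtype_injective
      rw [hmap, heq, ← MonoidHom.range_eq_map, Subgroup.range_subtype]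
    have hds : ∀ n, derivedSeries ↥N n = ⊤ := by
      intro n
      induction n with
      | zero => exact derivedSeries_zero ↥N
      | succ n ih => rw [derivedSeries_succ, ih, ← commutator_def, htop]
    obtain ⟨n, hn'⟩ := Group.IsSolvable.solvable (G := ↥N)
    rw [hds n] at hn'
    apply hN
    rw [eq_bot_iff]
    intro x hx
    have hmem : (⟨x, hx⟩ : ↥N) ∈ (⊥ : Subgroup ↥N) := hn' ▸ Subgroup.mem_top _
    rw [Subgroup.mem_bot] at hmem
    rw [Subgroup.mem_bot]
    exact congrArg Subtype.val hmem
  have hab : ∀ a ∈ N, ∀ b ∈ N, a * b = b * a := by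
    intro a ha b hb
    open scoped commutatorElement in have hmem : ⁅a, b⁆ ∈ ⁅N, N⁆ := Subgroup.commutator_mem_commutator ha hb
    rw [hcomm, Subgroup.mem_bot] at hmem
    exact commutatorElement_eq_one_iff_mul_comm.mp hmem
  -- the l-torsion subgroup of N
  set T : Subgroup G :=
    { carrier := {g | g ∈ N ∧ g ^ l = 1}
      one_mem' := ⟨N.one_mem, one_pow l⟩
      mul_mem' := by
        rintro a b ⟨haN, ha⟩ ⟨hbN, hb⟩
        refine ⟨N.mul_mem haN hbN, ?_⟩
        have hc : Commute a b := hab a haN b hbN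
        rw [hc.mul_pow, ha, hb, one_mul]
      inv_mem' := by
        rintro a ⟨haN, ha⟩
        exact ⟨N.inv_mem haN, by rw [inv_pow, ha, inv_one]⟩ } with hTdef
  have hTnormal : T.Normal := by
    constructor
    rintro g ⟨hgN, hgl⟩ h
    refine ⟨‹N.Normal›.conj_mem g hgN h, ?_⟩
    have hp : (h * g * h⁻¹) ^ l = h * g ^ l * h⁻¹ := by
      have := map_pow (MulAut.conj h) g l
      simpa using this.symm
    rw [hp, hgl, mul_one, mul_inv_cancel]
  have hTle : T ≤ N := fun g hg => hg.1
  obtain ⟨x, hx⟩ := exists_prime_orderOf_dvd_card' (G := ↥N) l hd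
  have hxl : (x : G) ^ l = 1 := by
    have h1 : x ^ l = 1 := by rw [← hx]; exact pow_orderOf_eq_one x
    rw [← SubgroupClass.coe_pow, h1, Subgroup.coe_one]
  have hx1 : (x : G) ≠ 1 := by
    intro h
    have hx1' : x = 1 := Subtype.ext h
    rw [hx1', orderOf_one] at hx
    exact hl.one_lt.ne' hx.symm
  have hTne : T ≠ ⊥ := by
    intro h
    apply hx1
    have : (x : G) ∈ T := ⟨x.2, hxl⟩
    rwa [h, Subgroup.mem_bot] at this
  have hTN : T = N := hmin T hTnormal hTne hTle
  -- N is an l-group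
  have hP : IsPGroup l ↥N := by
    intro g
    refine ⟨1, ?_⟩
    have hgT : (g : G) ∈ T := by rw [hTN]; exact g.2
    have : (g : G) ^ l = 1 := hgT.2
    rw [pow_one]
    exact Subtype.ext (by push_cast; exact this)
  -- action of N on M
  letI : MulAction ↥N M :=
    { smul := fun n m => ρ n m
      one_smul := fun m => by
        show ρ (((1 : ↥N) : G)) m = m
        rw [Subgroup.coe_one, map_one, Module.End.one_apply]
      mul_smul := fun a b m => by
        show ρ (((a * b : ↥N) : G)) m = ρ a (ρ b m)
        rw [Subgroup.coe_mul, map_mul]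
        rfl }
  have hsmul : ∀ (n : ↥N) (m : M), n • m = ρ n m := fun n m => rfl
  haveI : Finite M := (Module.finite_iff_finite (R := ZMod l)).mp inferInstance
  have hcardM : l ∣ Nat.card M := by
    haveI := Fintype.ofFinite M
    rw [Nat.card_eq_fintype_card, Module.card_eq_pow_finrank (K := ZMod l) (V := M), ZMod.card]
    exact dvd_pow_self l (Module.finrank_pos (R := ZMod l) (M := M)).ne'
  have h0fix : (0 : M) ∈ MulAction.fixedPoints ↥N M := by
    intro n
    rw [hsmul, map_zero]
  obtain ⟨m, hmfix, hm0⟩ := hP.exists_fixed_point_of_prime_dvd_card_of_fixed_point M hcardM h0fix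
  apply hm0
  symm
  apply hfix
  intro n hn
  exact hmfix ⟨n, hn⟩
end

section
/- Let l be a prime, G a finite solvable group, and M a faithful simple F_l[G]-module. Let L be any group containing the additive group of M as a normal subgroup with L/M ≅ G, such that the conjugation action of L/M ≅ G on M coincides with the given module structure. Then the extension splits: there exists a subgroup H of L which is a complement to M, i.e. H ∩ M = {1} and H·M = L. -/
noncomputable def qdMk {K : Type*} [Group K] (H : Subgroup K) [IsMulCommutative H] [H.FiniteIndex]
    (T : H.LeftTransversal) : Subgroup.QuotientDiff H := Quot.mk _ T

open Pointwise Subgroup MulAction in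
theorem aux_conj_complements {K : Type*} [Group K] [Finite K] (H : Subgroup K)
    [H.Normal] [IsMulCommutative H]
    (hcop : Nat.Coprime (Nat.card H) H.index) {B₁ B₂ : Subgroup K}
    (h1 : IsComplement' H B₁) (h2 : IsComplement' H B₂) :
    ∃ n : K, n ∈ H ∧ B₂ = B₁.map (MulAut.conj n).toMonoidHom := by
  classical
  have key : ∀ (B : Subgroup K) (h : IsComplement (B : Set K) (H : Set K)),
      stabilizer K (qdMk H ⟨(B : Set K), h⟩) = B := by
    intro B h
    have hle : B ≤ stabilizer K (qdMk H ⟨(B : Set K), h⟩) := by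
      intro b hb
      rw [mem_stabilizer_iff]
      have hT : (MulOpposite.op b⁻¹ •
          (⟨(B : Set K), h⟩ : H.LeftTransversal)) = ⟨(B : Set K), h⟩ := by
        refine Subtype.ext ?_
        show MulOpposite.op b⁻¹ • (B : Set K) = (B : Set K)
        ext x
        simp only [Set.mem_smul_set]
        constructor
        · rintro ⟨y, hy, rfl⟩
          show y * b⁻¹ ∈ B
          exact B.mul_mem hy (B.inv_mem hb)
        · intro hx
          exact ⟨x * b, B.mul_mem hx hb, by
            show (x * b) * b⁻¹ = x
            group⟩
      calc b • (qdMk H ⟨(B : Set K), h⟩)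
          = (qdMk H (MulOpposite.op b⁻¹ • ⟨(B : Set K), h⟩)) := rfl
        _ = (qdMk H ⟨(B : Set K), h⟩) := by rw [hT]
    have hstab := Subgroup.isComplement'_stabilizer_of_coprime
      (α := (qdMk H ⟨(B : Set K), h⟩)) hcop
    have hBcomp : IsComplement' H B := IsComplement'.symm h
    have hcard : Nat.card (stabilizer K (qdMk H ⟨(B : Set K), h⟩))
        ≤ Nat.card B := by
      have e1 := hBcomp.card_mul
      have e2 := hstab.card_mul
      have hpos : 0 < Nat.card H := Nat.card_pos
      exact (Nat.eq_of_mul_eq_mul_left hpos (e2.trans e1.symm)).le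
    exact (Subgroup.eq_of_le_of_card_ge hle hcard).symm
  obtain ⟨n, hn⟩ := Subgroup.exists_smul_eq hcop
    (qdMk H ⟨(B₁ : Set K), h1.symm⟩)
    (qdMk H ⟨(B₂ : Set K), h2.symm⟩)
  have hn' : (↑n : K) • (qdMk H ⟨(B₁ : Set K), h1.symm⟩)
      = (qdMk H ⟨(B₂ : Set K), h2.symm⟩) := hn
  refine ⟨↑n, n.2, ?_⟩
  rw [← key B₂ h2.symm, ← hn', MulAction.stabilizer_smul_eq_stabilizer_map_conj, key B₁ h1.symm]

theorem stmt7 (l : ℕ) [Fact l.Prime] {G : Type*} [Group G] [Finite G] [Group.IsSolvable G]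
    {M : Type*} [AddCommGroup M] [Module (ZMod l) M] [FiniteDimensional (ZMod l) M]
    (ρ : Representation (ZMod l) G M)
    (hfaith : Function.Injective ρ) (hM : Nontrivial M)
    (hsimple : ∀ W : Submodule (ZMod l) M, (∀ g : G, W.map (ρ g) = W) → W = ⊥ ∨ W = ⊤)
    {L : Type*} [Group L] (ι : M → L) (hι_inj : Function.Injective ι)
    (hι_hom : ∀ m m' : M, ι (m + m') = ι m * ι m')
    (π : L →* G) (hπ : Function.Surjective π)
    (hker : ∀ x : L, x ∈ π.ker ↔ ∃ m : M, ι m = x)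
    (hconj : ∀ (x : L) (m : M), x * ι m * x⁻¹ = ι (ρ (π x) m)) :
    ∃ H : Subgroup L, (∀ x ∈ H, (∃ m : M, ι m = x) → x = 1) ∧
      ∀ x : L, ∃ h ∈ H, ∃ m : M, x = h * ι m := by
  classical
  have hl : l.Prime := Fact.out
  haveI : NeZero l := ⟨hl.ne_zero⟩
  haveI : Module.Finite (ZMod l) M := ‹FiniteDimensional (ZMod l) M›
  haveI : Finite M := Module.finite_of_finite (ZMod l)
  -- basic facts about ι
  have hι0 : ι 0 = 1 := by
    have h00 := hι_hom 0 0
    rw [add_zero] at h00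
    exact (left_eq_mul.mp h00)
  have hιpow : ∀ (m : M) (n : ℕ), (ι m) ^ n = ι (n • m) := by
    intro m n
    induction n with
    | zero => simpa using hι0.symm
    | succ k ih => rw [pow_succ, ih, ← hι_hom, succ_nsmul]
  have hιl : ∀ m : M, (ι m) ^ l = 1 := by
    intro m
    rw [hιpow m l]
    have : (l : ℕ) • m = 0 := by
      rw [← Nat.cast_smul_eq_nsmul (ZMod l) l m, ZMod.natCast_self, zero_smul]
    rw [this, hι0]
  -- N := kernel of π
  set N : Subgroup L := π.ker with hN
  have hNmem : ∀ x : L, x ∈ N ↔ ∃ m : M, ι m = x := hker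
  haveI : Finite N := by
    have e : M ≃ N := Equiv.ofBijective (fun m => ⟨ι m, (hNmem _).mpr ⟨m, rfl⟩⟩)
      ⟨fun a b hab => hι_inj (Subtype.ext_iff.mp hab),
       fun ⟨x, hx⟩ => by
        obtain ⟨m, hm⟩ := (hNmem x).mp hx
        exact ⟨m, Subtype.ext hm⟩⟩
    exact Finite.of_equiv M e
  haveI : Finite L := by
    haveI : Finite (L ⧸ N) :=
      Finite.of_equiv G (QuotientGroup.quotientKerEquivOfSurjective π hπ).symm.toEquiv
    exact Finite.of_equiv _ (Subgroup.groupEquivQuotientProdSubgroup (s := N)).symm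
  haveI hNcomm : IsMulCommutative N := ⟨⟨by
    rintro ⟨a, ha⟩ ⟨b, hb⟩
    obtain ⟨m, rfl⟩ := (hNmem a).mp ha
    obtain ⟨m', rfl⟩ := (hNmem b).mp hb
    refine Subtype.ext ?_
    show ι m * ι m' = ι m' * ι m
    rw [← hι_hom, ← hι_hom, add_comm]⟩⟩
  have hordN : ∀ x ∈ N, x ^ l = 1 := by
    intro x hx
    obtain ⟨m, rfl⟩ := (hNmem x).mp hx
    exact hιl m
  -- the fixed-point lemma: nontrivial normal subgroups have no nonzero fixed vectors
  have hfix : ∀ S : Subgroup G, S.Normal → S ≠ ⊥ → ∀ m : M, (∀ s ∈ S, ρ s m = m) → m = 0 := by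
    intro S hSnorm hSne
    let W : Submodule (ZMod l) M :=
      { carrier := {m | ∀ s ∈ S, ρ s m = m}
        add_mem' := fun ha hb s hs => by rw [map_add, ha s hs, hb s hs]
        zero_mem' := fun s hs => by rw [map_zero]
        smul_mem' := fun c m hm s hs => by rw [map_smul, hm s hs] }
    have hWmem : ∀ m : M, m ∈ W ↔ ∀ s ∈ S, ρ s m = m := fun _ => Iff.rfl
    have hWstable : ∀ g : G, W.map (ρ g) = W := by
      intro g
      apply le_antisymm
      · rintro _ ⟨m, hm, rfl⟩ s hs
        have key : ρ s (ρ g m) = ρ g (ρ (g⁻¹ * s * g) m) := by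
          rw [← Module.End.mul_apply, ← map_mul, ← Module.End.mul_apply, ← map_mul]
          congr 2
          group
        rw [key, hm (g⁻¹ * s * g) (by simpa using hSnorm.conj_mem s hs g⁻¹)]
      · intro m hm
        refine ⟨ρ g⁻¹ m, fun s hs => ?_, ?_⟩
        · have key : ρ s (ρ g⁻¹ m) = ρ g⁻¹ (ρ (g * s * g⁻¹) m) := by
            rw [← Module.End.mul_apply, ← map_mul, ← Module.End.mul_apply, ← map_mul]
            congr 2
            group
          rw [key, hm _ (hSnorm.conj_mem s hs g)]
        · rw [← Module.End.mul_apply, ← map_mul, mul_inv_cancel, map_one, Module.End.one_apply]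
    rcases hsimple W hWstable with hbot | htop
    · intro m hm
      have : m ∈ W := hm
      rw [hbot] at this
      simpa using this
    · exfalso
      apply hSne
      rw [eq_bot_iff]
      intro s hs
      have : ρ s = ρ 1 := by
        rw [map_one]
        ext m
        have : m ∈ W := htop ▸ Submodule.mem_top
        exact this s hs
      rw [Subgroup.mem_bot]
      exact hfaith this
  rcases subsingleton_or_nontrivial G with hG | hG
  · -- trivial G : L = N
    refine ⟨⊥, fun x hx _ => Subgroup.mem_bot.mp hx, fun x => ?_⟩
    have hx : x ∈ N := by
      rw [hN, MonoidHom.mem_ker]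
      exact Subsingleton.elim _ _
    obtain ⟨m, rfl⟩ := (hNmem x).mp hx
    exact ⟨1, Subgroup.one_mem ⊥, m, (one_mul _).symm⟩
  -- G nontrivial: find A, a nontrivial abelian normal subgroup of G
  obtain ⟨nsol, hnsol⟩ := Group.IsSolvable.solvable (G := G)
  have hex : ∃ n, derivedSeries G n = ⊥ := ⟨nsol, hnsol⟩
  have h0 : derivedSeries G 0 ≠ ⊥ := by
    rw [derivedSeries_zero]
    intro htop
    obtain ⟨g, hg⟩ := exists_ne (1 : G)
    exact hg (Subgroup.mem_bot.mp (htop ▸ Subgroup.mem_top g))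
  obtain ⟨j, hj⟩ : ∃ j, Nat.find hex = j + 1 :=
    Nat.exists_eq_succ_of_ne_zero (fun h => h0 (h ▸ Nat.find_spec hex))
  set A : Subgroup G := derivedSeries G j with hA
  have hAne : A ≠ ⊥ := Nat.find_min hex (hj ▸ j.lt_succ_self)
  have hAcomm : ∀ a ∈ A, ∀ b ∈ A, a * b = b * a := by
    intro a ha b hb
    open scoped commutatorElement in
    have : ⁅a, b⁆ ∈ derivedSeries G (j + 1) := Subgroup.commutator_mem_commutator ha hb
    rw [← hj, Nat.find_spec hex, Subgroup.mem_bot] at this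
    exact commutatorElement_eq_one_iff_mul_comm.mp this
  haveI hAnormal : A.Normal := derivedSeries_normal G j
  -- l does not divide the order of A
  have hlA : ¬ l ∣ Nat.card A := by
    intro hdvd
    let Z : Subgroup G :=
      { carrier := {x | x ∈ A ∧ x ^ l = 1}
        one_mem' := ⟨A.one_mem, one_pow l⟩
        mul_mem' := by
          rintro x y ⟨hxA, hx⟩ ⟨hyA, hy⟩
          refine ⟨A.mul_mem hxA hyA, ?_⟩
          rw [Commute.mul_pow (hAcomm x hxA y hyA), hx, hy, one_mul]
        inv_mem' := by
          rintro x ⟨hxA, hx⟩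
          exact ⟨A.inv_mem hxA, by rw [inv_pow, hx, inv_one]⟩ }
    have hZmem : ∀ x : G, x ∈ Z ↔ x ∈ A ∧ x ^ l = 1 := fun _ => Iff.rfl
    have hZnormal : Z.Normal := by
      constructor
      intro z hz g
      refine ⟨hAnormal.conj_mem z hz.1 g, ?_⟩
      have : (MulAut.conj g z) ^ l = MulAut.conj g (z ^ l) := (map_pow _ _ _).symm
      simpa [MulAut.conj_apply, hz.2] using this
    obtain ⟨a, ha⟩ := exists_prime_orderOf_dvd_card' (G := A) l hdvd
    have haZ : (a : G) ∈ Z := by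
      refine ⟨a.2, ?_⟩
      have : a ^ l = 1 := by rw [← ha, pow_orderOf_eq_one]
      simpa using congrArg (Subtype.val) this
    have hane : (a : G) ≠ 1 := by
      intro h1
      have : a = 1 := by exact_mod_cast Subtype.ext h1
      rw [this, orderOf_one] at ha
      exact hl.one_lt.ne ha
    have hZne : Z ≠ ⊥ := by
      intro h
      exact hane (Subgroup.mem_bot.mp (h ▸ haZ))
    -- counting fixed points
    letI : MulAction Z M :=
      { smul := fun z m => ρ (z : G) m
        one_smul := fun m => by show ρ _ m = m; simp
        mul_smul := fun z z' m => by
          show ρ _ m = ρ _ (ρ _ m)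
          rw [← Module.End.mul_apply, ← map_mul]
          rfl }
    have hsmul_def : ∀ (z : Z) (m : M), z • m = ρ (z : G) m := fun _ _ => rfl
    have hZp : IsPGroup l Z := by
      intro z
      refine ⟨1, ?_⟩
      rw [pow_one]
      have : (z : G) ^ l = 1 := z.2.2
      exact_mod_cast Subtype.ext this
    have hcount := hZp.card_modEq_card_fixedPoints M
    have hfixZ : MulAction.fixedPoints Z M = {(0 : M)} := by
      ext m
      simp only [MulAction.mem_fixedPoints, Set.mem_singleton_iff]
      constructor
      · intro h
        refine hfix Z hZnormal hZne m ?_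
        intro s hs
        exact h ⟨s, hs⟩
      · rintro rfl z
        rw [hsmul_def, map_zero]
    have hfixcard : Nat.card (MulAction.fixedPoints Z M) = 1 := by
      rw [hfixZ]
      simp
    -- card M = l ^ finrank
    haveI : Fintype M := Fintype.ofFinite M
    have hcardM : Nat.card M = l ^ Module.finrank (ZMod l) M := by
      rw [Nat.card_eq_fintype_card, Module.card_eq_pow_finrank (K := ZMod l) (V := M), ZMod.card]
    have hdvdM : l ∣ Nat.card M := by
      rw [hcardM]
      exact dvd_pow_self l (Module.finrank_pos (R := ZMod l) (M := M)).ne'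
    rw [hfixcard] at hcount
    have h01 : 0 % l = 1 % l := (Nat.modEq_zero_iff_dvd.mpr hdvdM).symm.trans hcount
    rw [Nat.zero_mod, Nat.one_mod_eq_one.mpr hl.one_lt.ne'] at h01
    exact one_ne_zero h01.symm
  -- the preimage K of A in L
  haveI hNnormal : N.Normal := π.normal_ker
  set K : Subgroup L := A.comap π with hK
  haveI hKnormal : K.Normal := Subgroup.Normal.comap hAnormal π
  have hNK : N ≤ K := by
    intro x hx
    show π x ∈ A
    rw [MonoidHom.mem_ker.mp hx]
    exact A.one_mem
  set Nk : Subgroup K := N.subgroupOf K with hNkdef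
  haveI : Nk.Normal := Subgroup.normal_subgroupOf
  haveI : IsMulCommutative Nk := inferInstance
  -- the surjection K →* A induced by π
  let πK : K →* A := (π.domRestrict K).codRestrict A (fun x => x.2)
  have hπKsurj : Function.Surjective πK := by
    rintro ⟨a, ha⟩
    obtain ⟨x, hx⟩ := hπ a
    exact ⟨⟨x, show π x ∈ A from hx ▸ ha⟩, Subtype.ext hx⟩
  have hπKker : πK.ker = Nk := by
    ext x
    constructor
    · intro h
      apply Subgroup.mem_subgroupOf.mpr
      rw [hN, MonoidHom.mem_ker]
      exact congrArg Subtype.val h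
    · intro h
      apply Subtype.ext
      exact MonoidHom.mem_ker.mp (Subgroup.mem_subgroupOf.mp h)
  have hNkindex : Nk.index = Nat.card A := by
    rw [Subgroup.index_eq_card, ← hπKker]
    exact Nat.card_congr (QuotientGroup.quotientKerEquivOfSurjective πK hπKsurj).toEquiv
  have hNkp : IsPGroup l Nk := by
    intro x
    refine ⟨1, ?_⟩
    rw [pow_one]
    have hx : ((x : K) : L) ∈ N := Subgroup.mem_subgroupOf.mp x.2
    have hxl : ((x : K) : L) ^ l = 1 := hordN _ hx
    apply Subtype.ext
    rw [SubmonoidClass.coe_pow, OneMemClass.coe_one]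
    apply Subtype.ext
    rw [SubmonoidClass.coe_pow, OneMemClass.coe_one]
    exact hxl
  obtain ⟨dk, hdk⟩ := IsPGroup.exists_card_eq hNkp
  have hcop : Nat.Coprime (Nat.card Nk) Nk.index := by
    rw [hdk, hNkindex]
    exact Nat.Coprime.pow_left dk ((Nat.Prime.coprime_iff_not_dvd hl).mpr hlA)
  -- Schur-Zassenhaus
  obtain ⟨B', hB'⟩ := Subgroup.exists_right_complement'_of_coprime hcop
  set B : Subgroup L := B'.map K.subtype with hB
  have hBK : B ≤ K := Subgroup.map_subtype_le B'
  have hBN : ∀ y : L, y ∈ B → y ∈ N → y = 1 := by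
    intro y hyB hyN
    obtain ⟨b', hb', rfl⟩ := hyB
    have h1 : b' ∈ Nk := Subgroup.mem_subgroupOf.mpr hyN
    have h2 : b' ∈ Nk ⊓ B' := ⟨h1, hb'⟩
    have h3 : b' = 1 := Subgroup.mem_bot.mp (hB'.disjoint.le_bot h2)
    rw [h3]
    rfl
  have hπB : ∀ a : G, a ∈ A → ∃ b ∈ B, π b = a := by
    intro a ha
    obtain ⟨x, hx⟩ := hπ a
    have hxK : x ∈ K := by
      show π x ∈ A
      rw [hx]; exact ha
    obtain ⟨⟨nn, bb⟩, hnb⟩ := hB'.2 ⟨x, hxK⟩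
    refine ⟨((bb : K) : L), ⟨(bb : K), bb.2, rfl⟩, ?_⟩
    have hx' : ((nn : K) : L) * ((bb : K) : L) = x := by
      have h := congrArg (Subtype.val) hnb
      simpa using h
    have hn1 : π ((nn : K) : L) = 1 := by
      have : ((nn : K) : L) ∈ N := Subgroup.mem_subgroupOf.mp nn.2
      exact MonoidHom.mem_ker.mp this
    calc π ((bb : K) : L) = π (((nn : K) : L) * ((bb : K) : L)) := by
          rw [map_mul, hn1, one_mul]
      _ = π x := by rw [hx']
      _ = a := hx
  -- the complement: the normalizer of B
  refine ⟨Subgroup.normalizer (B : Set L), ?_, ?_⟩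
  · rintro x hx ⟨m, rfl⟩
    have hxN : ι m ∈ N := (hNmem _).mpr ⟨m, rfl⟩
    have hcomm : ∀ b ∈ B, ρ (π b) m = m := by
      intro b hb
      have h1 : (ι m) * b * (ι m)⁻¹ ∈ B := (Subgroup.mem_normalizer_iff.mp hx b).mp hb
      have h2 : (ι m) * b * (ι m)⁻¹ * b⁻¹ ∈ N := by
        have ha : b * (ι m)⁻¹ * b⁻¹ ∈ N := hNnormal.conj_mem _ (N.inv_mem hxN) b
        have := N.mul_mem hxN ha
        simpa [mul_assoc] using this
      have h3 : (ι m) * b * (ι m)⁻¹ * b⁻¹ ∈ B := B.mul_mem h1 (B.inv_mem hb)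
      have h4 : (ι m) * b * (ι m)⁻¹ * b⁻¹ = 1 := hBN _ h3 h2
      have h7 : ι m * b = b * ι m := by
        have h5 : (ι m) * b * (ι m)⁻¹ = b := by
          have := mul_eq_one_iff_eq_inv.mp h4
          simpa using this
        calc ι m * b = ((ι m) * b * (ι m)⁻¹) * ι m := by group
          _ = b * ι m := by rw [h5]
      have h6 : b * (ι m) * b⁻¹ = ι m := by
        rw [← h7]
        group
      rw [hconj b m] at h6
      exact hι_inj h6
    have hmfix : ∀ a ∈ A, ρ a m = m := by
      intro a ha
      obtain ⟨b, hb, rfl⟩ := hπB a ha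
      exact hcomm b hb
    rw [hfix A hAnormal hAne m hmfix, hι0]
  · intro x
    set B₂ : Subgroup L := B.map (MulAut.conj x).toMonoidHom with hB₂
    have hB2K : B₂ ≤ K := by
      rintro _ ⟨b, hb, rfl⟩
      exact hKnormal.conj_mem b (hBK hb) x
    set B₂' : Subgroup K := B₂.subgroupOf K with hB₂'
    have hcardB' : Nat.card B' = Nk.index :=
      Nat.eq_of_mul_eq_mul_left Nat.card_pos
        (hB'.card_mul.trans (Subgroup.card_mul_index Nk).symm)
    have hcard2 : Nat.card B₂' = Nat.card B' := by
      have e1 : Nat.card B₂' = Nat.card B₂ :=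
        Nat.card_congr (Subgroup.subgroupOfEquivOfLe hB2K).toEquiv
      have e2 : Nat.card B₂ = Nat.card B :=
        (Nat.card_congr (B.equivMapOfInjective _ (MulAut.conj x).injective).toEquiv).symm
      have e3 : Nat.card B = Nat.card B' :=
        (Nat.card_congr (B'.equivMapOfInjective _ (Subgroup.subtype_injective K)).toEquiv).symm
      rw [e1, e2, e3]
    have hcomp2 : Subgroup.IsComplement' Nk B₂' := by
      apply Subgroup.isComplement'_of_coprime
      · rw [hcard2]
        exact hB'.card_mul
      · rw [hcard2, hcardB']
        exact hcop
    obtain ⟨n, hnNk, hBeq⟩ := aux_conj_complements Nk hcop hB' hcomp2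
    have hmap : B₂ = B.map (MulAut.conj ((n : L))).toMonoidHom := by
      have h1 : B₂'.map K.subtype = B₂ := by
        rw [Subgroup.subgroupOf_map_subtype, inf_eq_left.mpr hB2K]
      rw [← h1, hBeq, Subgroup.map_map, hB, Subgroup.map_map]
      congr 1
    have hx_norm : (n : L)⁻¹ * x ∈ Subgroup.normalizer (B : Set L) := by
      rw [Subgroup.mem_normalizer_iff]
      intro b
      constructor
      · intro hb
        have hmem : x * b * x⁻¹ ∈ B₂ := by
          rw [hB₂]
          exact ⟨b, hb, rfl⟩
        rw [hmap, Subgroup.mem_map_equiv] at hmem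
        have : (MulAut.conj ((n : L))).symm (x * b * x⁻¹)
            = ((n : L)⁻¹ * x) * b * ((n : L)⁻¹ * x)⁻¹ := by
          rw [MulAut.conj_symm_apply]
          group
        rwa [this] at hmem
      · intro hb
        have hmem : x * b * x⁻¹ ∈ B.map (MulAut.conj ((n : L))).toMonoidHom := by
          rw [Subgroup.mem_map_equiv, MulAut.conj_symm_apply]
          have : (n : L)⁻¹ * (x * b * x⁻¹) * (n : L)
              = ((n : L)⁻¹ * x) * b * ((n : L)⁻¹ * x)⁻¹ := by group
          rwa [this]
        rw [← hmap, hB₂, Subgroup.mem_map_equiv, MulAut.conj_symm_apply] at hmem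
        have : x⁻¹ * (x * b * x⁻¹) * x = b := by group
        rwa [this] at hmem
    obtain ⟨m, hm⟩ := (hNmem (n : L)).mp (Subgroup.mem_subgroupOf.mp hnNk)
    refine ⟨(n : L)⁻¹ * x, hx_norm, ρ (π ((n : L)⁻¹ * x)⁻¹) m, ?_⟩
    rw [← hconj ((n : L)⁻¹ * x)⁻¹ m, hm]
    group
end

section
/- Let F be a field and D a finite Galois extension of F with solvable Galois group. Let K be an intermediate field, Galois over F, such that N = Gal(D|K) is an elementary abelian l-group (l prime) of order l^n with n > 0, and such that the conjugation action of Gal(K|F) on N (coming from the exact sequence 1 → Gal(D|K) → Gal(D|F) → Gal(K|F) → 1) makes N a faithful simple F_l[Gal(K|F)]-module. Then there exists an intermediate field F ⊆ E ⊆ D with [E:F] = l^n such that E is linearly disjoint from K over F (E ∩ K = F and E·K = D), E is a primitive extension of F, and D is the Galois closure of E over F. -/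
open Subgroup

section GroupTheory

variable {G : Type*} [Group G] [Finite G]

/-- A normal `l`-subgroup `M` containing the self-centralizing simple normal `N` equals `N`. -/
lemma aux_pgroup_le {N : Subgroup G} [hNn : N.Normal] {l n : ℕ} (hl : l.Prime) (hn : 0 < n)
    (hcard : Nat.card N = l ^ n)
    (hfaith : ∀ g : G, (∀ σ ∈ N, g * σ * g⁻¹ = σ) → g ∈ N)
    (hsimple : ∀ N' : Subgroup G, N' ≤ N → (∀ g : G, ∀ σ ∈ N', g * σ * g⁻¹ ∈ N') →
      N' = ⊥ ∨ N' = N)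
    (M : Subgroup G) (hMn : M.Normal) (hNM : N ≤ M) (hM : IsPGroup l M) : M ≤ N := by
  haveI : Fact l.Prime := ⟨hl⟩
  letI : MulAction M N := MulAction.compHom _ ((MulAut.conjNormal (H := N)).comp M.subtype)
  have smul_def : ∀ (m : M) (x : N), ((m • x : N) : G) = (m : G) * x * (m : G)⁻¹ :=
    fun m x => rfl
  have h1 : (1 : N) ∈ MulAction.fixedPoints M N := by
    intro m
    ext
    simp [smul_def]
  obtain ⟨b, hb, hb1⟩ := hM.exists_fixed_point_of_prime_dvd_card_of_fixed_point (α := N)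
    (by rw [hcard]; exact dvd_pow_self l hn.ne') h1
  set N' : Subgroup G := N ⊓ Subgroup.centralizer (M : Set G) with hN'def
  have hbmem : (b : G) ∈ N' := by
    rw [hN'def, Subgroup.mem_inf, Subgroup.mem_centralizer_iff]
    refine ⟨b.2, ?_⟩
    intro m hm
    have h := hb ⟨m, hm⟩
    have h2 : m * (b : G) * m⁻¹ = b := by
      rw [← smul_def ⟨m, hm⟩ b, h]
    calc m * (b : G) = (m * b * m⁻¹) * m := by group
    _ = (b : G) * m := by rw [h2]
  have hstable : ∀ g : G, ∀ σ ∈ N', g * σ * g⁻¹ ∈ N' := by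
    intro g σ hσ
    rw [hN'def, Subgroup.mem_inf] at hσ ⊢
    rw [Subgroup.mem_centralizer_iff] at hσ
    refine ⟨hNn.conj_mem σ hσ.1 g, ?_⟩
    rw [Subgroup.mem_centralizer_iff]
    intro m hm
    have hmem : g⁻¹ * m * g ∈ M := by
      have := hMn.conj_mem m hm g⁻¹
      simpa using this
    have hc := hσ.2 _ hmem
    -- hc : (g⁻¹ * m * g) * σ = σ * (g⁻¹ * m * g)
    have := congrArg (fun x => g * x * g⁻¹) hc
    simp only [mul_assoc] at this ⊢
    group at this ⊢
    simpa [mul_assoc] using this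
  rcases hsimple N' inf_le_left hstable with h | h
  · exfalso
    apply hb1
    have : (b : G) ∈ (⊥ : Subgroup G) := h ▸ hbmem
    rw [Subgroup.mem_bot] at this
    ext
    simp [this]
  · -- N ≤ centralizer M
    intro m hm
    apply hfaith
    intro σ hσ
    have hσ'' : σ ∈ N' := h ▸ hσ
    rw [hN'def, Subgroup.mem_inf] at hσ''
    have hσ' : σ ∈ Subgroup.centralizer (M : Set G) := hσ''.2
    have := (Subgroup.mem_centralizer_iff.mp hσ') m hm
    calc m * σ * m⁻¹ = (σ * m) * m⁻¹ := by rw [← this]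
    _ = σ := by group

end GroupTheory

open commutatorElement in
lemma exists_good_complement {G : Type*} [Group G] [Finite G] (hsolv : IsSolvable G)
    (N : Subgroup G) [hNn : N.Normal] (l n : ℕ) (hl : l.Prime) (hn : 0 < n)
    (hcard : Nat.card N = l ^ n)
    (hcomm : ∀ σ ∈ N, ∀ τ ∈ N, σ * τ = τ * σ)
    (hfaith : ∀ g : G, (∀ σ ∈ N, g * σ * g⁻¹ = σ) → g ∈ N)
    (hsimple : ∀ N' : Subgroup G, N' ≤ N → (∀ g : G, ∀ σ ∈ N', g * σ * g⁻¹ ∈ N') →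
      N' = ⊥ ∨ N' = N) :
    ∃ H : Subgroup G, H ⊓ N = ⊥ ∧ H ⊔ N = ⊤ ∧
      (∀ H' : Subgroup G, H ≤ H' → H' = H ∨ H' = ⊤) ∧
      (∀ C : Subgroup G, C ≤ H → C.Normal → C = ⊥) ∧
      Nat.card H * l ^ n = Nat.card G := by
  classical
  haveI : Fact l.Prime := ⟨hl⟩
  have hNpgroup : IsPGroup l N := IsPGroup.of_card hcard
  -- any proper supplement is a complement
  have hcompl : ∀ H : Subgroup G, H ⊔ N = ⊤ → H ≠ ⊤ → H ⊓ N = ⊥ := by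
    intro H hsup hne
    have hstab : ∀ g : G, ∀ σ ∈ H ⊓ N, g * σ * g⁻¹ ∈ H ⊓ N := by
      intro g σ hσ
      have hg : g ∈ (↑(H ⊔ N) : Set G) := by rw [hsup]; trivial
      rw [Subgroup.mul_normal] at hg
      obtain ⟨h', hh', x, hx, rfl⟩ := hg
      have hxσ : x * σ * x⁻¹ = σ := by
        have := hcomm x hx σ hσ.2
        calc x * σ * x⁻¹ = (σ * x) * x⁻¹ := by rw [← this]
        _ = σ := by group
      have heq : h' * x * σ * (h' * x)⁻¹ = h' * σ * h'⁻¹ := by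
        rw [mul_inv_rev]
        calc h' * x * σ * (x⁻¹ * h'⁻¹) = h' * (x * σ * x⁻¹) * h'⁻¹ := by group
        _ = h' * σ * h'⁻¹ := by rw [hxσ]
      rw [heq]
      exact ⟨H.mul_mem (H.mul_mem hh' hσ.1) (H.inv_mem hh'), hNn.conj_mem σ hσ.2 h'⟩
    rcases hsimple (H ⊓ N) inf_le_right hstab with h | h
    · exact h
    · exact absurd (le_antisymm le_top (hsup ▸ sup_le le_rfl (h ▸ inf_le_left : N ≤ H) : ⊤ ≤ H)) hne
  -- any subgroup intersecting N trivially has trivial normal subgroups below it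
  have hcore : ∀ H : Subgroup G, H ⊓ N = ⊥ → ∀ C : Subgroup G, C ≤ H → C.Normal → C = ⊥ := by
    intro H hinf C hCH hCn
    have hdisj : Disjoint C N := by
      rw [disjoint_iff]
      exact le_bot_iff.mp (le_trans (inf_le_inf_right N hCH) (le_of_eq hinf))
    have hcomm' := Subgroup.commute_of_normal_of_disjoint C N hCn hNn hdisj
    rw [eq_bot_iff]
    intro c hc
    have hcN : c ∈ N := by
      apply hfaith
      intro σ hσ
      have := (hcomm' c σ hc hσ).symm
      calc c * σ * c⁻¹ = (σ * c) * c⁻¹ := by rw [this]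
      _ = σ := by group
    have hmem : c ∈ C ⊓ N := ⟨hc, hcN⟩
    exact (le_trans (inf_le_inf_right N hCH) (le_of_eq hinf)) hmem
  -- case N = ⊤
  by_cases hNtop : N = ⊤
  · have hallsub : ∀ H' : Subgroup G, H' = ⊥ ∨ H' = N := by
      intro H'
      have hstab : ∀ g : G, ∀ σ ∈ H', g * σ * g⁻¹ ∈ H' := by
        intro g σ hσ
        have hgN : g ∈ N := hNtop ▸ Subgroup.mem_top g
        have hσN : σ ∈ N := hNtop ▸ Subgroup.mem_top σ
        have hcm := hcomm g hgN σ hσN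
        have hgg : g * σ * g⁻¹ = σ := by rw [hcm]; group
        rw [hgg]; exact hσ
      exact hsimple H' (hNtop ▸ le_top) hstab
    refine ⟨⊥, by simp, by simp [hNtop], ?_, ?_, ?_⟩
    · intro H' _
      rcases hallsub H' with h | h
      · exact Or.inl h
      · exact Or.inr (h.trans hNtop)
    · intro C hC _
      exact le_bot_iff.mp hC
    · rw [Subgroup.card_bot, one_mul, ← hcard, hNtop]
      exact Nat.card_congr (Equiv.subtypeUnivEquiv fun x => Subgroup.mem_top x)
  · -- main case : N ≠ ⊤
    set π := QuotientGroup.mk' N with hπdef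
    have hπsurj : Function.Surjective π := QuotientGroup.mk'_surjective N
    have hker : (π : G →* G ⧸ N).ker = N := QuotientGroup.ker_mk' N
    obtain ⟨g0, hg0⟩ : ∃ g, g ∉ N := by
      by_contra hc
      push_neg at hc
      exact hNtop ((Subgroup.eq_top_iff' N).mpr hc)
    haveI : Nontrivial (G ⧸ N) := by
      refine ⟨π g0, 1, fun h => hg0 ?_⟩
      rwa [← QuotientGroup.eq_one_iff g0]
    have hex : ∃ k, derivedSeries (G ⧸ N) k = ⊥ := by
      haveI : Group.IsSolvable G := hsolv
      exact Group.IsSolvable.solvable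
    have hkbot : derivedSeries (G ⧸ N) (Nat.find hex) = ⊥ := Nat.find_spec hex
    have hk0 : Nat.find hex ≠ 0 := by
      intro h
      rw [h, derivedSeries_zero] at hkbot
      exact top_ne_bot hkbot
    set A := derivedSeries (G ⧸ N) (Nat.find hex - 1) with hAdef
    have hAne : A ≠ ⊥ := Nat.find_min hex (Nat.sub_lt (Nat.pos_of_ne_zero hk0) one_pos)
    haveI hAnormal : A.Normal := derivedSeries_normal _ _
    have hAcomm : ∀ a ∈ A, ∀ b ∈ A, a * b = b * a := by
      intro a ha b hb
      have hmem : ⁅a, b⁆ ∈ derivedSeries (G ⧸ N) (Nat.find hex) := by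
        have heq : Nat.find hex = (Nat.find hex - 1) + 1 :=
          (Nat.succ_pred_eq_of_pos (Nat.pos_of_ne_zero hk0)).symm
        rw [heq, derivedSeries_succ]
        exact Subgroup.commutator_mem_commutator ha hb
      rw [hkbot, Subgroup.mem_bot] at hmem
      exact commutatorElement_eq_one_iff_mul_comm.mp hmem
    have hA1 : Nat.card A ≠ 1 := by
      rw [Ne, Subgroup.card_eq_one]
      exact hAne
    set p := (Nat.card A).minFac with hpdef
    have hpprime : p.Prime := Nat.minFac_prime hA1
    haveI : Fact p.Prime := ⟨hpprime⟩
    have hpdvd : p ∣ Nat.card A := Nat.minFac_dvd _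
    obtain ⟨Pbar⟩ : Nonempty (Sylow p A) := Sylow.nonempty
    have hPbar_ne : (Pbar : Subgroup A) ≠ ⊥ := by
      intro h
      have hccard := Pbar.card_eq_multiplicity
      rw [h, Subgroup.card_bot] at hccard
      have hpos : 0 < (Nat.card A).factorization p :=
        hpprime.factorization_pos_of_dvd Nat.card_pos.ne' hpdvd
      have h1 := (Nat.pow_eq_one.mp hccard.symm).resolve_right hpos.ne'
      exact hpprime.one_lt.ne' h1
    have hPbarnormal : (Pbar : Subgroup A).Normal := by
      constructor
      intro x hx g
      have hgx : g * x * g⁻¹ = x := by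
        apply Subtype.ext
        push_cast
        have h1 := hAcomm g g.2 x x.2
        rw [h1]
        group
      rw [hgx]; exact hx
    haveI hPchar : (Pbar : Subgroup A).Characteristic :=
      Sylow.characteristic_of_normal Pbar hPbarnormal
    set Mbar := (Pbar : Subgroup A).map A.subtype with hMbardef
    haveI hMbarnormal : Mbar.Normal := inferInstance
    have hMbar_ne : Mbar ≠ ⊥ := by
      rw [hMbardef, Ne, Subgroup.map_eq_bot_iff, Subgroup.ker_subtype, le_bot_iff]
      exact hPbar_ne
    have hMbar_pgroup : IsPGroup p Mbar := Pbar.2.map _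
    set M := Mbar.comap (π : G →* G ⧸ N) with hMdef
    haveI hMnormal : M.Normal := hMbarnormal.comap π
    have hNM : N ≤ M := by
      intro x hx
      show π x ∈ Mbar
      have hx1 : π x = 1 := (QuotientGroup.eq_one_iff x).mpr hx
      rw [hx1]; exact Mbar.one_mem
    have hMmap : M.map (π : G →* G ⧸ N) = Mbar :=
      Subgroup.map_comap_eq_self_of_surjective hπsurj Mbar
    have hpl : p ≠ l := by
      intro hpe
      have hMpgroup : IsPGroup l M := by
        refine IsPGroup.comap_of_ker_isPGroup ?_ π ?_
        · exact hpe ▸ hMbar_pgroup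
        · rw [hker]; exact hNpgroup
      have hle := aux_pgroup_le hl hn hcard hfaith hsimple M hMnormal hNM hMpgroup
      apply hMbar_ne
      rw [← hMmap, eq_bot_iff]
      rintro x ⟨y, hy, rfl⟩
      have hyN : y ∈ N := hle hy
      rw [Subgroup.mem_bot]
      exact (QuotientGroup.eq_one_iff y).mpr hyN
    obtain ⟨P⟩ : Nonempty (Sylow p M) := Sylow.nonempty
    set f := (π : G →* G ⧸ N).subgroupMap M with hfdef
    have hfsurj : Function.Surjective f := MonoidHom.subgroupMap_surjective _ M
    have hmappg : IsPGroup p (M.map (π : G →* G ⧸ N)) := hMmap ▸ hMbar_pgroup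
    have hmapf : (P : Subgroup M).map f = ⊤ := by
      have h1 := (P.mapSurjective hfsurj).3 (hmappg.to_subgroup ⊤) le_top
      have h2 := Sylow.coe_mapSurjective hfsurj P
      rw [← h2, ← h1]
    set Pm := (P : Subgroup M).map M.subtype with hPmdef
    have hPmM : Pm ≤ M := Subgroup.map_subtype_le _
    have hPm_pgroup : IsPGroup p Pm := P.2.map _
    have hMsup : N ⊔ Pm = M := by
      apply le_antisymm (sup_le hNM hPmM)
      intro m hm
      have hmem : f ⟨m, hm⟩ ∈ (P : Subgroup M).map f := by rw [hmapf]; trivial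
      obtain ⟨x, hxP, hfx⟩ := hmem
      have hπeq : π (x : G) = π m := by
        have h0 : ((f x : ↥(M.map (π : G →* G ⧸ N))) : G ⧸ N)
            = ((f ⟨m, hm⟩ : ↥(M.map (π : G →* G ⧸ N))) : G ⧸ N) := congrArg Subtype.val hfx
        exact h0
      have hmx : m * (x : G)⁻¹ ∈ N := by
        rw [← hker, MonoidHom.mem_ker, map_mul, map_inv, hπeq]
        group
      have hmeq : m = (m * (x : G)⁻¹) * x := by group
      rw [hmeq]
      exact Subgroup.mul_mem _ (Subgroup.mem_sup_left hmx)
        (Subgroup.mem_sup_right ⟨x, hxP, rfl⟩)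
    have hPne : (P : Subgroup M) ≠ ⊥ := by
      intro h
      rw [h, Subgroup.map_bot] at hmapf
      haveI : Nontrivial ↥(M.map (π : G →* G ⧸ N)) := by
        rw [hMmap]
        exact (Subgroup.nontrivial_iff_ne_bot Mbar).mpr hMbar_ne
      exact bot_ne_top hmapf
    have hPm_ne : Pm ≠ ⊥ := by
      rw [hPmdef, Ne, Subgroup.map_eq_bot_iff, Subgroup.ker_subtype, le_bot_iff]
      exact hPne
    have hfr : Subgroup.normalizer (Pm : Set G) ⊔ M = ⊤ := Sylow.normalizer_sup_eq_top P
    have hsupH0 : Subgroup.normalizer (Pm : Set G) ⊔ N = ⊤ := by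
      rw [← hMsup] at hfr
      rw [← hfr, sup_comm N Pm, ← sup_assoc]
      congr 1
      exact (sup_eq_left.mpr Subgroup.le_normalizer).symm
    have hH0ne : Subgroup.normalizer (Pm : Set G) ≠ ⊤ := by
      intro htop
      have hPmnormal : Pm.Normal := Subgroup.normalizer_eq_top_iff.mp htop
      have hdisj : Pm ⊓ N = ⊥ := by
        rw [eq_bot_iff]
        intro x hx
        obtain ⟨a, ha⟩ := hPm_pgroup ⟨x, hx.1⟩
        obtain ⟨b, hb⟩ := hNpgroup ⟨x, hx.2⟩
        have ha' : x ^ p ^ a = 1 := by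
          have := congrArg (Subtype.val) ha
          push_cast at this
          exact this
        have hb' : x ^ l ^ b = 1 := by
          have := congrArg (Subtype.val) hb
          push_cast at this
          exact this
        have h1 : orderOf x ∣ p ^ a := orderOf_dvd_of_pow_eq_one ha'
        have h2 : orderOf x ∣ l ^ b := orderOf_dvd_of_pow_eq_one hb'
        have hco : Nat.Coprime (p ^ a) (l ^ b) :=
          Nat.Coprime.pow _ _ ((Nat.coprime_primes hpprime hl).mpr hpl)
        have hord : orderOf x = 1 := Nat.dvd_one.mp (hco ▸ Nat.dvd_gcd h1 h2)
        rw [Subgroup.mem_bot]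
        exact orderOf_eq_one_iff.mp hord
      have hcomm2 := Subgroup.commute_of_normal_of_disjoint Pm N hPmnormal hNn
        (disjoint_iff.mpr hdisj)
      have hPmN : Pm ≤ N := by
        intro x hx
        apply hfaith
        intro σ hσ
        have hcx := (hcomm2 x σ hx hσ).symm
        calc x * σ * x⁻¹ = (σ * x) * x⁻¹ := by rw [hcx]
        _ = σ := by group
      apply hPm_ne
      rw [eq_bot_iff, ← hdisj]
      exact le_inf le_rfl hPmN
    obtain ⟨H, hH0H, hHmax⟩ := Finite.exists_le_maximal (p := fun K : Subgroup G => K ≠ ⊤) hH0ne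
    have hsup : H ⊔ N = ⊤ := by
      rw [eq_top_iff, ← hsupH0]
      exact sup_le_sup_right hH0H N
    have hinf : H ⊓ N = ⊥ := hcompl H hsup hHmax.prop
    refine ⟨H, hinf, hsup, ?_, hcore H hinf, ?_⟩
    · intro H' hHH'
      by_cases h : H' = ⊤
      · exact Or.inr h
      · exact Or.inl (le_antisymm (hHmax.2 h hHH') hHH')
    · have hcompl' : Subgroup.IsComplement' H N := by
        apply Subgroup.isComplement'_of_disjoint_and_mul_eq_univ (disjoint_iff.mpr hinf)
        rw [← Subgroup.mul_normal H N, hsup]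
        exact Subgroup.coe_top
      have hcm := hcompl'.card_mul
      rw [hcard] at hcm
      exact hcm

theorem stmt9 {F D : Type*} [Field F] [Field D] [Algebra F D]
    [FiniteDimensional F D] [IsGalois F D] (hsolv : IsSolvable (D ≃ₐ[F] D))
    (K : IntermediateField F D) [IsGalois F K]
    (l n : ℕ) (hl : l.Prime) (hn : 0 < n)
    (hcardN : Nat.card K.fixingSubgroup = l ^ n)
    (horder : ∀ σ ∈ K.fixingSubgroup, σ ≠ 1 → orderOf σ = l)
    (hcomm : ∀ σ ∈ K.fixingSubgroup, ∀ τ ∈ K.fixingSubgroup, σ * τ = τ * σ)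
    (hfaith : ∀ g : D ≃ₐ[F] D,
      (∀ σ ∈ K.fixingSubgroup, g * σ * g⁻¹ = σ) → g ∈ K.fixingSubgroup)
    (hsimple : ∀ N' : Subgroup (D ≃ₐ[F] D), N' ≤ K.fixingSubgroup →
      (∀ g : D ≃ₐ[F] D, ∀ σ ∈ N', g * σ * g⁻¹ ∈ N') →
      N' = ⊥ ∨ N' = K.fixingSubgroup) :
    ∃ E : IntermediateField F D, Module.finrank F E = l ^ n ∧
      E ⊓ K = ⊥ ∧ E ⊔ K = ⊤ ∧
      (∀ K' : IntermediateField F D, K' ≤ E → K' = ⊥ ∨ K' = E) ∧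
      IntermediateField.normalClosure F E D = ⊤ := by
  classical
  haveI : Finite (D ≃ₐ[F] D) := Finite.of_fintype _
  haveI hNnormal : K.fixingSubgroup.Normal := inferInstance
  obtain ⟨H, hinf, hsup, hmax, hcore, hcardH⟩ :=
    exists_good_complement hsolv K.fixingSubgroup l n hl hn hcardN hcomm hfaith hsimple
  set E := IntermediateField.fixedField H with hEdef
  have hfixE : E.fixingSubgroup = H := IntermediateField.fixingSubgroup_fixedField H
  have hfb : IntermediateField.fixedField (⊥ : Subgroup (D ≃ₐ[F] D)) = ⊤ := by
    rw [← IntermediateField.fixingSubgroup_top (F := F) (E := D), IsGalois.fixedField_fixingSubgroup]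
  have hft : IntermediateField.fixedField (⊤ : Subgroup (D ≃ₐ[F] D)) = ⊥ := by
    rw [← IntermediateField.fixingSubgroup_bot (F := F) (E := D), IsGalois.fixedField_fixingSubgroup]
  refine ⟨E, ?_, ?_, ?_, ?_, ?_⟩
  · have h2 : Module.finrank E D = Nat.card H := by
      rw [hEdef, IntermediateField.finrank_fixedField_eq_card, Nat.card_eq_fintype_card]
    have h3 : Module.finrank F D = Nat.card (D ≃ₐ[F] D) := by
      rw [← IsGalois.card_aut_eq_finrank, Nat.card_eq_fintype_card]
    have h1 : Module.finrank F E * Module.finrank E D = Module.finrank F D :=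
      Module.finrank_mul_finrank F E D
    rw [h2, h3, ← hcardH] at h1
    have hpos : 0 < Nat.card H := Nat.card_pos
    apply Nat.eq_of_mul_eq_mul_right hpos
    rw [h1, Nat.mul_comm]
  · apply (IsGalois.intermediateFieldEquivSubgroup (F := F) (E := D)).injective
    rw [OrderIso.map_inf, OrderIso.map_bot]
    show E.fixingSubgroup ⊔ K.fixingSubgroup = ⊤
    rw [hfixE]
    exact hsup
  · apply (IsGalois.intermediateFieldEquivSubgroup (F := F) (E := D)).injective
    rw [OrderIso.map_sup, OrderIso.map_top]
    show E.fixingSubgroup ⊓ K.fixingSubgroup = ⊥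
    rw [hfixE]
    exact hinf
  · intro K' hK'
    have hHle : H ≤ K'.fixingSubgroup := (IntermediateField.le_iff_le H K').mp hK'
    rcases hmax K'.fixingSubgroup hHle with h | h
    · right
      rw [← IsGalois.fixedField_fixingSubgroup K', h, ← hEdef]
    · left
      rw [← IsGalois.fixedField_fixingSubgroup K', h, hft]
  · set L' := IntermediateField.normalClosure F E D with hL'def
    have hle : E ≤ L' := IntermediateField.le_normalClosure E
    haveI : IsGalois F L' :=
      { to_isSeparable := Algebra.isSeparable_tower_bot_of_isSeparable F L' D
        to_normal := inferInstance }
    have hCle : L'.fixingSubgroup ≤ H := by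
      rw [← hfixE]
      intro g hg
      rw [IntermediateField.mem_fixingSubgroup_iff] at hg ⊢
      intro x hx
      exact hg x (hle hx)
    have hC : L'.fixingSubgroup = ⊥ := hcore _ hCle inferInstance
    rw [← IsGalois.fixedField_fixingSubgroup L', hC, hfb]
end

section
/- Let Ω be a finite set with more than one element, let V be a finite-dimensional vector space over F_l (l prime) of dimension n > 0 acting on Ω simply transitively (so Ω is a torsor under the additive group of V), and let G be a subgroup of the symmetric group on Ω containing the image of V (acting by its torsor structure) as a normal subgroup. If G is solvable and primitive as a permutation group on Ω, then the F_l[G/V]-module V, with G/V acting via conjugation of G on V, is a faithful simple module. -/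
theorem stmt14 (l : ℕ) [Fact l.Prime] {V : Type*} [AddCommGroup V] [Module (ZMod l) V]
    [FiniteDimensional (ZMod l) V] (hdim : 0 < Module.finrank (ZMod l) V)
    {Ω : Type*} [Finite Ω] (hΩ : 1 < Nat.card Ω)
    (ι : V → Equiv.Perm Ω) (hι_hom : ∀ v w : V, ι (v + w) = ι v * ι w)
    (hsimptrans : ∀ x y : Ω, ∃! v : V, ι v x = y)
    (G : Subgroup (Equiv.Perm Ω)) (himg : ∀ v : V, ι v ∈ G)
    (hnormal : ∀ g ∈ G, ∀ v : V, ∃ w : V, g * ι v * g⁻¹ = ι w)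
    (hsolv : IsSolvable G) (hprim : IsPrimitivePermGroup G) :
    (∀ g ∈ G, (∀ v : V, g * ι v * g⁻¹ = ι v) → ∃ v : V, g = ι v) ∧
      ∀ W : Submodule (ZMod l) V,
        (∀ g ∈ G, ∀ v ∈ W, ∃ w ∈ W, g * ι v * g⁻¹ = ι w) → W = ⊥ ∨ W = ⊤ := by
  have hι0 : ι 0 = 1 := by
    have h := hι_hom 0 0
    rw [add_zero] at h
    exact (mul_left_cancel (a := ι 0) (by rw [← h, mul_one])).symm
  have hιneg : ∀ v : V, ι (-v) = (ι v)⁻¹ := by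
    intro v
    have h := hι_hom (-v) v
    rw [neg_add_cancel, hι0] at h
    exact eq_inv_of_mul_eq_one_left h.symm
  have hne : Nonempty Ω := (Nat.card_pos_iff.mp (by omega)).1
  obtain ⟨x₀⟩ := hne
  have hinj : ∀ (x : Ω) (v w : V), ι v x = ι w x → v = w := by
    intro x v w h
    exact (hsimptrans x (ι w x)).unique h rfl
  constructor
  · intro g hg hcomm
    obtain ⟨w, hw, -⟩ := hsimptrans x₀ (g x₀)
    refine ⟨w, Equiv.ext fun y => ?_⟩
    obtain ⟨v, hv, -⟩ := hsimptrans x₀ y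
    have hgv : g * ι v = ι v * g := mul_inv_eq_iff_eq_mul.mp (hcomm v)
    calc g y = g (ι v x₀) := by rw [hv]
      _ = (g * ι v) x₀ := rfl
      _ = (ι v * g) x₀ := by rw [hgv]
      _ = ι v (ι w x₀) := by rw [Equiv.Perm.mul_apply, hw]
      _ = ι (v + w) x₀ := by rw [hι_hom, Equiv.Perm.mul_apply]
      _ = ι (w + v) x₀ := by rw [add_comm]
      _ = ι w (ι v x₀) := by rw [hι_hom, Equiv.Perm.mul_apply]
      _ = ι w y := by rw [hv]
  · intro W hW
    by_contra hcon
    push_neg at hcon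
    obtain ⟨hWbot, hWtop⟩ := hcon
    have requiv : Equivalence (fun a b : Ω => ∃ w ∈ W, ι w a = b) := by
      refine ⟨fun a => ⟨0, W.zero_mem, by rw [hι0]; rfl⟩, ?_, ?_⟩
      · rintro a b ⟨w, hw, hab⟩
        exact ⟨-w, W.neg_mem hw, by rw [hιneg, ← hab, Equiv.Perm.inv_def, Equiv.symm_apply_apply]⟩
      · rintro a b c ⟨w, hw, hab⟩ ⟨w', hw', hbc⟩
        exact ⟨w' + w, W.add_mem hw' hw,
          by rw [hι_hom, Equiv.Perm.mul_apply, hab, hbc]⟩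
    let r : Setoid Ω := ⟨_, requiv⟩
    have hmem : ∀ a b : Ω, r a b ↔ ∃ w ∈ W, ι w a = b := fun a b => Iff.rfl
    refine hprim.2 ⟨r.classes, r.isPartition_classes, ?_, ?_, ?_⟩
    · -- more than one class
      obtain ⟨v, hv⟩ : ∃ v : V, v ∉ W := by
        by_contra h
        push_neg at h
        exact hWtop (Submodule.eq_top_iff'.mpr h)
      rw [Set.one_lt_ncard_iff (Set.toFinite _)]
      refine ⟨{ x | r x x₀ }, { x | r x (ι v x₀) }, r.mem_classes x₀,
        r.mem_classes (ι v x₀), ?_⟩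
      intro heq
      have hx : x₀ ∈ { x | r x x₀ } := requiv.refl x₀
      rw [heq] at hx
      obtain ⟨w, hwW, hwe⟩ := hx
      exact hv (hinj x₀ w v hwe ▸ hwW)
    · -- a class with more than one element
      obtain ⟨w₀, hw₀W, hw₀⟩ := Submodule.exists_mem_ne_zero_of_ne_bot hWbot
      refine ⟨{ x | r x x₀ }, r.mem_classes x₀, ?_⟩
      rw [Set.one_lt_ncard_iff (Set.toFinite _)]
      refine ⟨x₀, ι w₀ x₀, requiv.refl x₀,
        ⟨-w₀, W.neg_mem hw₀W, by rw [hιneg, Equiv.Perm.inv_def, Equiv.symm_apply_apply]⟩, ?_⟩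
      intro heq
      apply hw₀
      exact (hinj x₀ w₀ 0 (by rw [hι0]; exact heq.symm)).symm ▸ rfl
    · -- stability
      rintro g hg B ⟨x, rfl⟩
      refine ⟨g x, ?_⟩
      ext a
      constructor
      · rintro ⟨b, ⟨w, hwW, hwe⟩, rfl⟩
        obtain ⟨w', hw'W, hconj⟩ := hW g hg w hwW
        refine ⟨w', hw'W, ?_⟩
        have : ι w' (g b) = (g * ι w * g⁻¹) (g b) := by rw [hconj]
        rw [this]
        simp only [Equiv.Perm.mul_apply, Equiv.Perm.inv_def, Equiv.symm_apply_apply]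
        rw [hwe]
      · rintro ⟨w, hwW, hwe⟩
        obtain ⟨w', hw'W, hconj⟩ := hW g⁻¹ (G.inv_mem hg) w hwW
        refine ⟨g⁻¹ a, ⟨w', hw'W, ?_⟩, by simp⟩
        have : ι w' (g⁻¹ a) = (g⁻¹ * ι w * g⁻¹⁻¹) (g⁻¹ a) := by rw [hconj]
        rw [this]
        simp only [inv_inv, Equiv.Perm.mul_apply, Equiv.Perm.inv_def, Equiv.symm_symm, Equiv.apply_symm_apply]
        rw [hwe]
        simp
end
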